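/- arXiv:1103.2809 — 7 statements merged into one kernel-verified Lean document; each statement's English description precedes it below -/
import Mathlib

section
/- For every real ε ∈ (0,1) and every integer m ≥ 2 there exists a finite list of integers k_1, …, k_t with t ≤ ⌈(2/ε)·ln(2m)⌉ (in particular t = O((log m)/ε)) such that for every integer b with b ≢ 0 (mod m), (1/t²)·(Σ_{i=1}^t cos(2π k_i b / m))² < ε. -/
open Real Finset


lemma aux_sum_cos (m : ℕ) (hm : 1 ≤ m) (b : ℤ) (hb : ¬ ((m:ℤ) ∣ b)) :
    ∑ j ∈ Finset.range m, Real.cos (2 * π * j * b / m) = 0 := by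
  have hm0 : (m:ℝ) ≠ 0 := by positivity
  have hmC : (m:ℂ) ≠ 0 := by exact_mod_cast hm0
  set z : ℂ := Complex.exp (2 * Real.pi * Complex.I * b / m) with hz
  have hz1 : z ≠ 1 := by
    intro h
    rw [hz, Complex.exp_eq_one_iff] at h
    obtain ⟨n, hn⟩ := h
    apply hb
    have hπ : (Real.pi : ℂ) ≠ 0 := by exact_mod_cast Real.pi_ne_zero
    have h2 : (2:ℂ) * Real.pi * Complex.I ≠ 0 := by simp [hπ, Complex.I_ne_zero]
    have hb' : (b:ℂ) = n * m := by
      field_simp at hn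
      apply mul_left_cancel₀ h2
      linear_combination (2 * Real.pi * Complex.I) * hn
    have hbz : b = n * m := by exact_mod_cast hb'
    exact hbz ▸ dvd_mul_left (m:ℤ) n
  have hzm : z ^ m = 1 := by
    rw [hz, ← Complex.exp_nat_mul]
    have h2 : (m:ℂ) * (2 * Real.pi * Complex.I * b / m) = b * (2 * Real.pi * Complex.I) := by
      field_simp
    rw [h2]
    exact_mod_cast Complex.exp_int_mul_two_pi_mul_I b
  have hsum : ∑ j ∈ Finset.range m, z ^ j = 0 := by
    rw [geom_sum_eq hz1, hzm]
    simp
  have hre := congrArg Complex.re hsum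
  rw [Complex.re_sum] at hre
  simp only [Complex.zero_re] at hre
  rw [← hre]
  apply Finset.sum_congr rfl
  intro j hj
  have : z ^ j = Complex.exp (((2 * π * j * b / m : ℝ) : ℂ) * Complex.I) := by
    rw [hz, ← Complex.exp_nat_mul]
    congr 1
    push_cast
    ring
  rw [this, Complex.exp_ofReal_mul_I_re]

lemma aux_pi_sum (t m : ℕ) (f : Fin m → ℝ) :
    ∑ k : Fin t → Fin m, ∏ i, f (k i) = (∑ j, f j) ^ t := by
  have h1 : (∑ j, f j) ^ t = ∏ _i : Fin t, ∑ j, f j := by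
    rw [Finset.prod_const, Finset.card_univ, Fintype.card_fin]
  rw [h1, Finset.prod_univ_sum]
  rw [Fintype.piFinset_univ]

lemma aux_chernoff (t m : ℕ) (g : Fin m → ℝ) (hg : ∀ j, |g j| ≤ 1) (hsum : ∑ j, g j = 0)
    (lam s : ℝ) (hlam : 0 ≤ lam) :
    ((Finset.univ.filter (fun k : Fin t → Fin m => s ≤ ∑ i, g (k i))).card : ℝ)
      ≤ Real.exp (-(lam * s)) * (m * Real.exp (lam ^ 2 / 2)) ^ t := by
  have hcoord : ∑ j, Real.exp (lam * g j) ≤ m * Real.exp (lam ^ 2 / 2) := by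
    calc ∑ j, Real.exp (lam * g j)
        ≤ ∑ j, (Real.cosh lam + g j * Real.sinh lam) := by
          apply Finset.sum_le_sum
          intro j _
          rw [mul_comm]
          exact Real.exp_mul_le_cosh_add_mul_sinh (hg j) lam
      _ = m * Real.cosh lam + (∑ j, g j) * Real.sinh lam := by
          rw [Finset.sum_add_distrib, Finset.sum_const, Finset.card_univ, Fintype.card_fin,
            ← Finset.sum_mul]
          ring
      _ = m * Real.cosh lam := by rw [hsum]; ring
      _ ≤ m * Real.exp (lam ^ 2 / 2) := by
          apply mul_le_mul_of_nonneg_left (Real.cosh_le_exp_half_sq lam) (by positivity)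
  calc ((Finset.univ.filter (fun k : Fin t → Fin m => s ≤ ∑ i, g (k i))).card : ℝ)
      = ∑ k ∈ Finset.univ.filter (fun k : Fin t → Fin m => s ≤ ∑ i, g (k i)), (1:ℝ) := by
        rw [Finset.sum_const]; simp
    _ ≤ ∑ k ∈ Finset.univ.filter (fun k : Fin t → Fin m => s ≤ ∑ i, g (k i)),
          Real.exp (-(lam * s)) * ∏ i, Real.exp (lam * g (k i)) := by
        apply Finset.sum_le_sum
        intro k hk
        rw [Finset.mem_filter] at hk
        rw [← Real.exp_sum, ← Real.exp_add]
        rw [show (1:ℝ) = Real.exp 0 from (Real.exp_zero).symm]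
        apply Real.exp_le_exp.2
        have : lam * s ≤ ∑ i, lam * g (k i) := by
          rw [← Finset.mul_sum]
          exact mul_le_mul_of_nonneg_left hk.2 hlam
        linarith
    _ ≤ ∑ k : Fin t → Fin m, Real.exp (-(lam * s)) * ∏ i, Real.exp (lam * g (k i)) := by
        apply Finset.sum_le_sum_of_subset_of_nonneg (Finset.filter_subset _ _)
        intro k _ _
        positivity
    _ = Real.exp (-(lam * s)) * ∑ k : Fin t → Fin m, ∏ i, Real.exp (lam * g (k i)) := by
        rw [Finset.mul_sum]
    _ = Real.exp (-(lam * s)) * (∑ j, Real.exp (lam * g j)) ^ t := by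
        rw [aux_pi_sum t m (fun j => Real.exp (lam * g j))]
    _ ≤ Real.exp (-(lam * s)) * (m * Real.exp (lam ^ 2 / 2)) ^ t := by
        apply mul_le_mul_of_nonneg_left _ (Real.exp_nonneg _)
        apply pow_le_pow_left₀ (by positivity) hcoord


/-- For every `ε ∈ (0,1)` and integer `m ≥ 2`, there is a list of integers
`k_1, …, k_t` with `t ≤ ⌈(2/ε)·ln(2m)⌉` that is "ε-good" for `m`: for every integer
`b` with `b ≢ 0 (mod m)`, `(1/t²)·(Σ_{i=1}^t cos(2π k_i b / m))² < ε`. -/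
theorem exists_good_set (ε : ℝ) (hε0 : 0 < ε) (hε1 : ε < 1) (m : ℕ) (hm : 2 ≤ m) :
    ∃ t : ℕ, 0 < t ∧ t ≤ ⌈(2 / ε) * Real.log (2 * (m : ℝ))⌉₊ ∧
      ∃ k : Fin t → ℤ,
        ∀ b : ℤ, ¬ ((m : ℤ) ∣ b) →
          (1 / (t : ℝ) ^ 2) *
            (∑ i, Real.cos (2 * Real.pi * (k i : ℝ) * (b : ℝ) / (m : ℝ))) ^ 2 < ε := by
  classical
  have hm0 : (0:ℝ) < m := by positivity
  have hm1 : (1:ℝ) < 2 * m := by nlinarith [show (2:ℝ) ≤ m by exact_mod_cast hm]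
  have hlog : 0 < Real.log (2 * m) := Real.log_pos hm1
  set t := ⌈(2 / ε) * Real.log (2 * (m : ℝ))⌉₊ with ht
  have htpos : 0 < t := Nat.ceil_pos.2 (by positivity)
  have htR : (0:ℝ) < t := by exact_mod_cast htpos
  refine ⟨t, htpos, le_refl _, ?_⟩
  -- the per-residue cos functions
  set g : ℕ → Fin m → ℝ := fun b j => Real.cos (2 * π * j * b / m) with hg
  have hgabs : ∀ b j, |g b j| ≤ 1 := fun b j => Real.abs_cos_le_one _
  have hgsum : ∀ b ∈ Finset.Ico 1 m, ∑ j, g b j = 0 := by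
    intro b hb
    rw [Finset.mem_Ico] at hb
    have hnd : ¬ ((m:ℤ) ∣ (b:ℤ)) := by
      rw [Int.natCast_dvd_natCast]
      intro h
      have := Nat.le_of_dvd (by omega) h
      omega
    have h0 := aux_sum_cos m (by omega) b hnd
    have h2 : ∑ j : Fin m, g b j = ∑ j ∈ Finset.range m, Real.cos (2 * π * j * ((b:ℤ):ℝ) / m) := by
      rw [← Fin.sum_univ_eq_sum_range (fun j : ℕ => Real.cos (2 * π * j * ((b:ℤ):ℝ) / m)) m]
      apply Finset.sum_congr rfl
      intro j _
      simp only [hg]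
      norm_cast
    rw [h2, h0]
  -- bad sets
  set s : ℝ := Real.sqrt ε * t with hs
  set Bad : ℕ → Finset (Fin t → Fin m) :=
    fun b => Finset.univ.filter (fun k => s ≤ |∑ i, g b (k i)|) with hBad
  have hsqε : Real.sqrt ε ^ 2 = ε := Real.sq_sqrt hε0.le
  -- exp bound
  have hexp : Real.exp (-(ε * t / 2)) ≤ 1 / (2 * m) := by
    have h1 : (2 / ε) * Real.log (2 * m) ≤ t := Nat.le_ceil _
    have h2 : Real.log (2 * m) ≤ ε * t / 2 := by
      rw [div_mul_eq_mul_div, div_le_iff₀ hε0] at h1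
      nlinarith
    calc Real.exp (-(ε * t / 2)) ≤ Real.exp (-(Real.log (2 * m))) :=
          Real.exp_le_exp.2 (by linarith)
      _ = 1 / (2 * m) := by
          rw [Real.exp_neg, Real.exp_log (by positivity), one_div]
  -- bound each bad set
  have hBadcard : ∀ b ∈ Finset.Ico 1 m, ((Bad b).card : ℝ)
      ≤ 2 * (m:ℝ) ^ t * Real.exp (-(ε * t / 2)) := by
    intro b hb
    have hsub : Bad b ⊆ (Finset.univ.filter (fun k : Fin t → Fin m => s ≤ ∑ i, g b (k i)))
        ∪ (Finset.univ.filter (fun k : Fin t → Fin m => s ≤ ∑ i, (fun j => -(g b j)) (k i))) := by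
      intro k hk
      rw [hBad, Finset.mem_filter] at hk
      rw [Finset.mem_union, Finset.mem_filter, Finset.mem_filter]
      rcases le_abs.mp hk.2 with h | h
      · exact Or.inl ⟨Finset.mem_univ _, h⟩
      · refine Or.inr ⟨Finset.mem_univ _, ?_⟩
        simp only [Finset.sum_neg_distrib]
        linarith
    have h1 := aux_chernoff t m (g b) (hgabs b) (hgsum b hb) (Real.sqrt ε) s
      (Real.sqrt_nonneg ε)
    have h2 := aux_chernoff t m (fun j => -(g b j)) (fun j => by simpa using hgabs b j)
      (by rw [Finset.sum_neg_distrib, hgsum b hb, neg_zero]) (Real.sqrt ε) s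
      (Real.sqrt_nonneg ε)
    have hval : Real.exp (-(Real.sqrt ε * s)) * ((m:ℝ) * Real.exp (Real.sqrt ε ^ 2 / 2)) ^ t
        = (m:ℝ) ^ t * Real.exp (-(ε * t / 2)) := by
      have hss : Real.sqrt ε * s = ε * t := by
        rw [hs, ← mul_assoc, Real.mul_self_sqrt hε0.le]
      calc Real.exp (-(Real.sqrt ε * s)) * ((m:ℝ) * Real.exp (Real.sqrt ε ^ 2 / 2)) ^ t
          = (m:ℝ) ^ t * (Real.exp (-(ε * t)) * Real.exp ((t:ℕ) * (ε / 2))) := by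
            rw [hsqε, mul_pow, ← Real.exp_nat_mul, hss]; ring
        _ = (m:ℝ) ^ t * Real.exp (-(ε * t) + (t:ℕ) * (ε / 2)) := by rw [Real.exp_add]
        _ = (m:ℝ) ^ t * Real.exp (-(ε * t / 2)) := by congr 1; ring
    rw [hval] at h1 h2
    calc ((Bad b).card : ℝ) ≤ ((Finset.univ.filter (fun k : Fin t → Fin m => s ≤ ∑ i, g b (k i))).card : ℝ)
          + ((Finset.univ.filter (fun k : Fin t → Fin m => s ≤ ∑ i, (fun j => -(g b j)) (k i))).card : ℝ) := by
          have := Finset.card_le_card hsub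
          have h3 := Finset.card_union_le
            (Finset.univ.filter (fun k : Fin t → Fin m => s ≤ ∑ i, g b (k i)))
            (Finset.univ.filter (fun k : Fin t → Fin m => s ≤ ∑ i, (fun j => -(g b j)) (k i)))
          exact_mod_cast le_trans this h3
      _ ≤ 2 * (m:ℝ) ^ t * Real.exp (-(ε * t / 2)) := by linarith
  -- total count is less than m^t
  have hcount : (((Finset.Ico 1 m).biUnion Bad).card : ℝ) < (m:ℝ) ^ t := by
    have h1 : (((Finset.Ico 1 m).biUnion Bad).card : ℝ) ≤ ∑ b ∈ Finset.Ico 1 m, ((Bad b).card : ℝ) := by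
      exact_mod_cast Finset.card_biUnion_le
    have h2 : ∑ b ∈ Finset.Ico 1 m, ((Bad b).card : ℝ)
        ≤ (m - 1 : ℝ) * (2 * (m:ℝ) ^ t * Real.exp (-(ε * t / 2))) := by
      calc ∑ b ∈ Finset.Ico 1 m, ((Bad b).card : ℝ)
          ≤ ∑ b ∈ Finset.Ico 1 m, (2 * (m:ℝ) ^ t * Real.exp (-(ε * t / 2))) :=
            Finset.sum_le_sum hBadcard
        _ = (m - 1 : ℝ) * (2 * (m:ℝ) ^ t * Real.exp (-(ε * t / 2))) := by
            rw [Finset.sum_const, Nat.card_Ico, nsmul_eq_mul]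
            congr 1
            push_cast [Nat.cast_sub (by omega : 1 ≤ m)]
            ring

    have h3 : (m - 1 : ℝ) * (2 * (m:ℝ) ^ t * Real.exp (-(ε * t / 2))) < (m:ℝ) ^ t := by
      have hmpow : (0:ℝ) < (m:ℝ) ^ t := by positivity
      have : (m - 1 : ℝ) * (2 * (m:ℝ) ^ t * Real.exp (-(ε * t / 2)))
          ≤ (m - 1 : ℝ) * (2 * (m:ℝ) ^ t * (1 / (2 * m))) := by
        apply mul_le_mul_of_nonneg_left _ (by nlinarith [show (2:ℝ) ≤ m by exact_mod_cast hm])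
        apply mul_le_mul_of_nonneg_left hexp (by positivity)
      have heq : (m - 1 : ℝ) * (2 * (m:ℝ) ^ t * (1 / (2 * m))) = (m - 1) / m * (m:ℝ) ^ t := by
        field_simp
      have hlt : (m - 1 : ℝ) / m * (m:ℝ) ^ t < (m:ℝ) ^ t := by
        have : (m - 1 : ℝ) / m < 1 := by
          rw [div_lt_one hm0]; linarith
        nlinarith
      linarith [heq ▸ this]
    linarith
  -- extract a good tuple
  have hcardU : (Finset.univ : Finset (Fin t → Fin m)).card = m ^ t := by
    simp [Finset.card_univ]
  obtain ⟨k, hk⟩ : ∃ k : Fin t → Fin m, k ∉ (Finset.Ico 1 m).biUnion Bad := by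
    by_contra h
    push_neg at h
    have hsub2 : (Finset.univ : Finset (Fin t → Fin m)) ⊆ (Finset.Ico 1 m).biUnion Bad :=
      fun k _ => h k
    have hle := Finset.card_le_card hsub2
    rw [hcardU] at hle
    have hle' : ((m:ℝ)) ^ t ≤ (((Finset.Ico 1 m).biUnion Bad).card : ℝ) := by
      exact_mod_cast hle
    linarith
  have hgood : ∀ b ∈ Finset.Ico 1 m, |∑ i, g b (k i)| < s := by
    intro b hb
    by_contra h
    push_neg at h
    exact hk (Finset.mem_biUnion.2 ⟨b, hb, by rw [hBad, Finset.mem_filter]; exact ⟨Finset.mem_univ _, h⟩⟩)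
  -- conclude
  refine ⟨fun i => ((k i : ℕ) : ℤ), ?_⟩
  intro b hb
  set r : ℕ := (b % m).toNat with hr
  have hmz : (m:ℤ) ≠ 0 := by exact_mod_cast (by omega : m ≠ 0)
  have hmod0 : 0 ≤ b % m := Int.emod_nonneg b hmz
  have hmodlt : b % m < m := Int.emod_lt_of_pos b (by exact_mod_cast (by omega : 0 < m))
  have hrne : b % m ≠ 0 := by
    intro h
    exact hb (Int.dvd_of_emod_eq_zero h)
  have hrIco : r ∈ Finset.Ico 1 m := by
    rw [Finset.mem_Ico]
    omega
  have hrcast : ((r:ℕ):ℝ) = ((b % m : ℤ) : ℝ) := by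
    rw [hr]; exact_mod_cast Int.toNat_of_nonneg hmod0
  -- periodicity: each cosine equals the one with b replaced by r
  have hper : ∀ i, Real.cos (2 * π * ((k i : ℕ) : ℝ) * (b:ℝ) / m)
      = g r (k i) := by
    intro i
    have hdecomp : (b:ℝ) = ((b % m : ℤ) : ℝ) + (m:ℝ) * ((b / m : ℤ) : ℝ) := by
      have h := Int.emod_add_mul_ediv b m
      have h2 : (b:ℝ) = ((b % m + m * (b / m) : ℤ) : ℝ) := by exact_mod_cast congrArg (fun z : ℤ => (z : ℝ)) h.symm
      rw [h2]; push_cast; ring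
    rw [hg]
    have harg : 2 * π * ((k i : ℕ) : ℝ) * (b:ℝ) / m
        = 2 * π * ((k i : ℕ) : ℝ) * (r:ℝ) / m + ((k i : ℕ) * (b / m) : ℤ) * (2 * π) := by
      rw [hdecomp, hrcast]
      push_cast
      field_simp
    rw [harg, Real.cos_add_int_mul_two_pi]
  have hS : |∑ i, Real.cos (2 * π * (((k i : ℕ) : ℤ) : ℝ) * (b:ℝ) / m)| < s := by
    have : ∑ i, Real.cos (2 * π * (((k i : ℕ) : ℤ) : ℝ) * (b:ℝ) / m) = ∑ i, g r (k i) := by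
      apply Finset.sum_congr rfl
      intro i _
      push_cast
      exact hper i
    rw [this]
    exact hgood r hrIco
  set S := ∑ i, Real.cos (2 * π * (((k i : ℕ) : ℤ) : ℝ) * (b:ℝ) / m) with hSdef
  have hS2 : S ^ 2 < ε * t ^ 2 := by
    have h1 : S ^ 2 = |S| ^ 2 := (sq_abs S).symm
    have h2 : |S| ^ 2 < s ^ 2 := by
      apply pow_lt_pow_left₀ hS (abs_nonneg S)
      omega
    rw [h1]
    calc |S| ^ 2 < s ^ 2 := h2
      _ = ε * t ^ 2 := by rw [hs, mul_pow, hsqε]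
  rw [div_mul_eq_mul_div, one_mul, div_lt_iff₀ (by positivity : (0:ℝ) < (t:ℝ) ^ 2)]
  linarith
end

section
/- Let ε ∈ (0,1), let m ≥ 2 be an integer, let f : {0,1}^n → {0,1} be a Boolean function, and let g(x) = c_0 + c_1 x_1 + … + c_n x_n (integer coefficients) be a linear characteristic polynomial of f over Z_m. Then there exist t ≤ ⌈(2/ε)·ln(2m)⌉ and integers k_1, …, k_t such that the function P(σ) = (1/t²)·(Σ_{i=1}^t cos(2π k_i g(σ) / m))² satisfies: P(σ) = 1 for every σ with f(σ) = 1, and P(σ) < ε for every σ with f(σ) = 0. (P(σ) is the acceptance probability of the quantum fingerprinting read-once branching program for f.) -/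
open Real Finset

/-- The value of the linear polynomial `g(x) = c₀ + c₁x₁ + … + cₙxₙ` at a Boolean input. -/
def linEval {n : ℕ} (c0 : ℤ) (c : Fin n → ℤ) (σ : Fin n → Bool) : ℤ :=
  c0 + ∑ i, c i * (if σ i then 1 else 0)

lemma sum_cos_eq_zero (m : ℕ) (hm : 2 ≤ m) (r : ℤ) (hr : ¬ (m:ℤ) ∣ r) :
    ∑ k : Fin m, Real.cos (2 * Real.pi * k * r / m) = 0 := by
  have hm0 : (m:ℂ) ≠ 0 := by exact_mod_cast (by omega : m ≠ 0)
  set ζ : ℂ := Complex.exp (2 * Real.pi * r / m * Complex.I) with hζ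
  have hζm : ζ ^ m = 1 := by
    rw [hζ, ← Complex.exp_nat_mul]
    have : (m:ℂ) * (2 * Real.pi * r / m * Complex.I) = r * (2 * Real.pi * Complex.I) := by
      field_simp
    rw [this]
    rw [Complex.exp_int_mul_two_pi_mul_I r]
  have hζ1 : ζ ≠ 1 := by
    intro h
    rw [hζ, Complex.exp_eq_one_iff] at h
    obtain ⟨q, hq⟩ := h
    apply hr
    have hI : (Complex.I : ℂ) ≠ 0 := Complex.I_ne_zero
    have hπ : (Real.pi : ℂ) ≠ 0 := by exact_mod_cast Real.pi_ne_zero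
    have h3 : (2 * (Real.pi:ℂ) * Complex.I) * r = (2 * (Real.pi:ℂ) * Complex.I) * (q * m) := by
      field_simp at hq
      linear_combination (2 * (Real.pi:ℂ) * Complex.I) * hq
    have hne : (2 * (Real.pi:ℂ) * Complex.I) ≠ 0 := by
      simp [Complex.I_ne_zero, hπ]
    have : (r : ℂ) = (q:ℂ) * m := mul_left_cancel₀ hne h3
    have : r = q * m := by exact_mod_cast this
    exact ⟨q, by rw [this, mul_comm]⟩
  have hgeom : ∑ k ∈ Finset.range m, ζ ^ k = 0 := by
    rw [geom_sum_eq hζ1, hζm]; simp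
  have hterm : ∀ k : ℕ, (ζ ^ k).re = Real.cos (2 * Real.pi * k * r / m) := by
    intro k
    rw [hζ, ← Complex.exp_nat_mul]
    have : (k:ℂ) * (2 * Real.pi * r / m * Complex.I)
        = ((2 * Real.pi * k * r / m : ℝ) : ℂ) * Complex.I := by
      push_cast; field_simp
    rw [this, Complex.exp_ofReal_mul_I_re]
  rw [Fin.sum_univ_eq_sum_range (fun k => Real.cos (2 * Real.pi * (k:ℝ) * r / m)) m]
  calc ∑ k ∈ Finset.range m, Real.cos (2 * Real.pi * k * r / m)
      = (∑ k ∈ Finset.range m, ζ ^ k).re := by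
        rw [Complex.re_sum]; exact Finset.sum_congr rfl fun k _ => (hterm k).symm
    _ = 0 := by rw [hgeom]; simp

lemma mgf_bound {m : ℕ} (c : Fin m → ℝ) (hc : ∀ k, |c k| ≤ 1) (hc0 : ∑ k, c k = 0)
    (lam : ℝ) : ∑ k, Real.exp (lam * c k) ≤ (m : ℝ) * Real.exp (lam ^ 2 / 2) := by
  calc ∑ k, Real.exp (lam * c k)
      ≤ ∑ k, (Real.cosh lam + c k * Real.sinh lam) := by
        refine Finset.sum_le_sum fun k _ => ?_
        rw [mul_comm]
        exact Real.exp_mul_le_cosh_add_mul_sinh (hc k) lam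
    _ = (m : ℝ) * Real.cosh lam := by
        rw [Finset.sum_add_distrib, ← Finset.sum_mul, hc0, Finset.sum_const]
        simp [nsmul_eq_mul]
    _ ≤ (m : ℝ) * Real.exp (lam ^ 2 / 2) := by
        refine mul_le_mul_of_nonneg_left (Real.cosh_le_exp_half_sq lam) (by positivity)

lemma count_tail {m t : ℕ} (c : Fin m → ℝ) (hc : ∀ k, |c k| ≤ 1) (hc0 : ∑ k, c k = 0)
    (lam s : ℝ) (hlam : 0 ≤ lam) (F : Finset (Fin t → Fin m))
    (hF : ∀ g ∈ F, s ≤ ∑ i, c (g i)) :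
    (F.card : ℝ) ≤ (m : ℝ) ^ t * Real.exp ((t : ℝ) * lam ^ 2 / 2 - lam * s) := by
  have key : ∑ g : Fin t → Fin m, Real.exp (lam * ∑ i, c (g i))
      ≤ ((m : ℝ) * Real.exp (lam ^ 2 / 2)) ^ t := by
    have h1 : ∀ g : Fin t → Fin m, Real.exp (lam * ∑ i, c (g i))
        = ∏ i, Real.exp (lam * c (g i)) := by
      intro g; rw [Finset.mul_sum, Real.exp_sum]
    calc ∑ g : Fin t → Fin m, Real.exp (lam * ∑ i, c (g i))
        = ∑ g : Fin t → Fin m, ∏ i, Real.exp (lam * c (g i)) :=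
          Finset.sum_congr rfl fun g _ => h1 g
      _ = ∏ _i : Fin t, ∑ k, Real.exp (lam * c k) := by
          rw [Finset.prod_univ_sum, ← Fintype.piFinset_univ]
      _ = (∑ k, Real.exp (lam * c k)) ^ t := by
          rw [Finset.prod_const]; simp
      _ ≤ ((m : ℝ) * Real.exp (lam ^ 2 / 2)) ^ t := by
          refine pow_le_pow_left₀ (Finset.sum_nonneg fun k _ => (Real.exp_pos _).le) ?_ t
          exact mgf_bound c hc hc0 lam
  have markov : (F.card : ℝ) * Real.exp (lam * s)
      ≤ ((m : ℝ) * Real.exp (lam ^ 2 / 2)) ^ t := by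
    calc (F.card : ℝ) * Real.exp (lam * s) = ∑ _g ∈ F, Real.exp (lam * s) := by
          rw [Finset.sum_const, nsmul_eq_mul]
      _ ≤ ∑ g ∈ F, Real.exp (lam * ∑ i, c (g i)) := by
          refine Finset.sum_le_sum fun g hg => ?_
          exact Real.exp_le_exp.2 (mul_le_mul_of_nonneg_left (hF g hg) hlam)
      _ ≤ ∑ g : Fin t → Fin m, Real.exp (lam * ∑ i, c (g i)) :=
          Finset.sum_le_sum_of_subset_of_nonneg (Finset.subset_univ F)
            (fun g _ _ => (Real.exp_pos _).le)
      _ ≤ _ := key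
  have hrw : ((m : ℝ) * Real.exp (lam ^ 2 / 2)) ^ t
      = (m : ℝ) ^ t * Real.exp ((t : ℝ) * lam ^ 2 / 2) := by
    rw [mul_pow, ← Real.exp_nat_mul]; ring_nf
  rw [hrw] at markov
  rw [Real.exp_sub, ← mul_div_assoc, le_div_iff₀ (Real.exp_pos _)]
  exact markov

/-- If a Boolean function `f` has a linear characteristic polynomial
`g = c₀ + c₁x₁ + … + cₙxₙ` over `ℤ_m`, then the quantum fingerprinting program
accepts every `σ ∈ f⁻¹(1)` with probability `1` and every `σ ∈ f⁻¹(0)` with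
probability `< ε`, using `t ≤ ⌈(2/ε)·ln(2m)⌉` parameters `k_1, …, k_t`. -/
theorem linear_polynomial_fingerprinting (n : ℕ) (ε : ℝ) (hε0 : 0 < ε) (hε1 : ε < 1)
    (m : ℕ) (hm : 2 ≤ m) (f : (Fin n → Bool) → Bool) (c0 : ℤ) (c : Fin n → ℤ)
    (hchar : ∀ σ : Fin n → Bool, ((m : ℤ) ∣ linEval c0 c σ) ↔ f σ = true) :
    ∃ t : ℕ, 0 < t ∧ t ≤ ⌈(2 / ε) * Real.log (2 * (m : ℝ))⌉₊ ∧
      ∃ k : Fin t → ℤ,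
        ∀ σ : Fin n → Bool,
          (f σ = true →
            (1 / (t : ℝ) ^ 2) *
              (∑ i, Real.cos (2 * Real.pi * (k i : ℝ) * ((linEval c0 c σ : ℤ) : ℝ) / (m : ℝ))) ^ 2
              = 1) ∧
          (f σ = false →
            (1 / (t : ℝ) ^ 2) *
              (∑ i, Real.cos (2 * Real.pi * (k i : ℝ) * ((linEval c0 c σ : ℤ) : ℝ) / (m : ℝ))) ^ 2
              < ε) := by
  classical
  have hmR : (2:ℝ) ≤ (m:ℝ) := by exact_mod_cast hm
  have hmpos : (0:ℝ) < m := by linarith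
  set L := Real.log (2 * (m:ℝ)) with hL
  have hLpos : 0 < L := Real.log_pos (by linarith)
  set t := ⌈(2/ε) * L⌉₊ with htdef
  have htpos : 0 < t := Nat.ceil_pos.mpr (by positivity)
  have htR : (0:ℝ) < t := by exact_mod_cast htpos
  refine ⟨t, htpos, le_refl _, ?_⟩
  have hts : ((2:ℝ)/ε) * L ≤ t := Nat.le_ceil _
  have htε : L ≤ (t:ℝ) * ε / 2 := by
    have h2 : ((2:ℝ)/ε) * L * (ε/2) = L := by field_simp
    calc L = (2/ε)*L*(ε/2) := h2.symm
      _ ≤ (t:ℝ)*(ε/2) := mul_le_mul_of_nonneg_right hts (by positivity)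
      _ = (t:ℝ)*ε/2 := by ring
  set sqe := Real.sqrt ε with hsqe
  have hsqpos : 0 < sqe := Real.sqrt_pos.mpr hε0
  have hss : sqe * sqe = ε := Real.mul_self_sqrt hε0.le
  set S : ℕ → (Fin t → Fin m) → ℝ :=
    fun r g => ∑ i, Real.cos (2 * Real.pi * ((g i : ℕ) : ℝ) * (r:ℝ) / m) with hS
  set Bad : ℕ → Finset (Fin t → Fin m) :=
    fun r => univ.filter (fun g => (t:ℝ) * sqe ≤ |S r g|) with hBad
  have hcount : ∀ r ∈ Finset.Ioo 0 m, ((Bad r).card : ℝ) ≤ (m:ℝ)^t / m := by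
    intro r hr
    obtain ⟨hr0, hrm⟩ := Finset.mem_Ioo.mp hr
    have hrd : ¬ (m:ℤ) ∣ (r:ℤ) := by
      intro hdvd
      have := Int.le_of_dvd (by exact_mod_cast hr0) hdvd
      omega
    set cc : Fin m → ℝ := fun k => Real.cos (2 * Real.pi * ((k : ℕ):ℝ) * (r:ℝ) / m) with hcc
    have hc : ∀ k, |cc k| ≤ 1 := fun k => Real.abs_cos_le_one _
    have hc0 : ∑ k, cc k = 0 := by
      have h := sum_cos_eq_zero m hm (r:ℤ) hrd
      rw [hcc]
      convert h using 2 with k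
      simp only [Int.cast_natCast]
    have hSc : ∀ g : Fin t → Fin m, S r g = ∑ i, cc (g i) := fun g => rfl
    have hexp : (t:ℝ) * sqe^2/2 - sqe*((t:ℝ)*sqe) = -((t:ℝ)*ε/2) := by
      rw [sq]
      linear_combination (-(t:ℝ)/2) * hss
    have hhalf : Real.exp (-((t:ℝ)*ε/2)) ≤ 1/(2*(m:ℝ)) := by
      rw [Real.exp_neg]
      rw [one_div, inv_le_inv₀ (Real.exp_pos _) (by linarith)]
      calc (2*(m:ℝ)) = Real.exp L := (Real.exp_log (by linarith)).symm
        _ ≤ Real.exp ((t:ℝ)*ε/2) := Real.exp_le_exp.2 htε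
    have hplus := count_tail cc hc hc0 sqe ((t:ℝ)*sqe) hsqpos.le
      (univ.filter fun g : Fin t → Fin m => (t:ℝ)*sqe ≤ ∑ i, cc (g i))
      (fun g hg => (Finset.mem_filter.mp hg).2)
    have hc0' : ∑ k, (fun k => -cc k) k = 0 := by simp [hc0]
    have hminus := count_tail (fun k => -cc k) (fun k => by simpa using hc k) hc0'
      sqe ((t:ℝ)*sqe) hsqpos.le
      (univ.filter fun g : Fin t → Fin m => (t:ℝ)*sqe ≤ ∑ i, -cc (g i))
      (fun g hg => (Finset.mem_filter.mp hg).2)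
    have hsub : Bad r ⊆ (univ.filter fun g : Fin t → Fin m => (t:ℝ)*sqe ≤ ∑ i, cc (g i))
        ∪ (univ.filter fun g : Fin t → Fin m => (t:ℝ)*sqe ≤ ∑ i, -cc (g i)) := by
      intro g hg
      rw [hBad] at hg
      simp only [Finset.mem_filter, Finset.mem_union, Finset.mem_univ, true_and] at hg ⊢
      rcases le_abs.mp hg with h | h
      · left; rw [← hSc g]; exact h
      · right; rw [Finset.sum_neg_distrib]; rw [← hSc g]; exact h
    have hcard := Finset.card_le_card hsub
    have hcard2 := Finset.card_union_le
      (univ.filter fun g : Fin t → Fin m => (t:ℝ)*sqe ≤ ∑ i, cc (g i))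
      (univ.filter fun g : Fin t → Fin m => (t:ℝ)*sqe ≤ ∑ i, -cc (g i))
    have hchain : ((Bad r).card : ℝ) ≤ (m:ℝ)^t * Real.exp (-((t:ℝ)*ε/2))
        + (m:ℝ)^t * Real.exp (-((t:ℝ)*ε/2)) := by
      rw [← hexp]
      have : ((Bad r).card : ℝ) ≤ ((univ.filter fun g : Fin t → Fin m =>
          (t:ℝ)*sqe ≤ ∑ i, cc (g i)).card : ℝ)
          + ((univ.filter fun g : Fin t → Fin m => (t:ℝ)*sqe ≤ ∑ i, -cc (g i)).card : ℝ) := by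
        exact_mod_cast le_trans hcard hcard2
      refine le_trans this (add_le_add hplus ?_)
      convert hminus using 4
    have hfin : (m:ℝ)^t * Real.exp (-((t:ℝ)*ε/2)) + (m:ℝ)^t * Real.exp (-((t:ℝ)*ε/2))
        ≤ (m:ℝ)^t / m := by
      have hmt : (0:ℝ) < (m:ℝ)^t := by positivity
      have := mul_le_mul_of_nonneg_left hhalf hmt.le
      calc (m:ℝ)^t * Real.exp (-((t:ℝ)*ε/2)) + (m:ℝ)^t * Real.exp (-((t:ℝ)*ε/2))
          = 2 * ((m:ℝ)^t * Real.exp (-((t:ℝ)*ε/2))) := by ring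
        _ ≤ 2 * ((m:ℝ)^t * (1/(2*(m:ℝ)))) := by linarith
        _ = (m:ℝ)^t / m := by field_simp
    exact le_trans hchain hfin
  set B := (Finset.Ioo 0 m).biUnion Bad with hB
  obtain ⟨g, hg⟩ : ∃ g : Fin t → Fin m, g ∉ B := by
    have hBcard : (B.card : ℝ) < (m:ℝ)^t := by
      have h1 : (B.card : ℝ) ≤ ∑ r ∈ Finset.Ioo 0 m, ((Bad r).card : ℝ) := by
        have := Finset.card_biUnion_le (s := Finset.Ioo 0 m) (t := Bad)
        calc (B.card : ℝ) ≤ ((∑ r ∈ Finset.Ioo 0 m, (Bad r).card : ℕ) : ℝ) := by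
              exact_mod_cast this
          _ = ∑ r ∈ Finset.Ioo 0 m, ((Bad r).card : ℝ) := by push_cast; ring
      have h2 : ∑ r ∈ Finset.Ioo 0 m, ((Bad r).card : ℝ)
          ≤ ∑ r ∈ Finset.Ioo 0 m, (m:ℝ)^t / m := Finset.sum_le_sum hcount
      have h3 : ∑ r ∈ Finset.Ioo 0 m, (m:ℝ)^t / m = ((m:ℝ)-1) * ((m:ℝ)^t/m) := by
        rw [Finset.sum_const, Nat.card_Ioo, nsmul_eq_mul]
        have hmm : m - 0 - 1 = m - 1 := by omega
        rw [hmm, Nat.cast_sub (by omega : 1 ≤ m)]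
        push_cast
        ring
      have hy : (0:ℝ) < (m:ℝ)^t/m := by positivity
      have h4 : ((m:ℝ)-1) * ((m:ℝ)^t/m) < (m:ℝ) * ((m:ℝ)^t/m) := by nlinarith
      have h5 : (m:ℝ) * ((m:ℝ)^t/m) = (m:ℝ)^t := by field_simp
      linarith
    by_contra h
    push_neg at h
    have hsubu : (univ : Finset (Fin t → Fin m)) ⊆ B := fun g _ => h g
    have hcard := Finset.card_le_card hsubu
    rw [Finset.card_univ, Fintype.card_fun, Fintype.card_fin, Fintype.card_fin] at hcard
    have : ((m^t : ℕ):ℝ) ≤ (B.card:ℝ) := by exact_mod_cast hcard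
    push_cast at this
    linarith
  refine ⟨fun i => ((g i : ℕ) : ℤ), fun σ => ⟨?_, ?_⟩⟩
  · intro hf
    obtain ⟨d, hd⟩ := (hchar σ).mpr hf
    have hterm : ∀ i : Fin t,
        Real.cos (2 * Real.pi * ((((g i : ℕ):ℤ)):ℝ) * ((linEval c0 c σ : ℤ) : ℝ) / (m : ℝ)) = 1 := by
      intro i
      have hang : 2 * Real.pi * ((((g i : ℕ):ℤ)):ℝ) * ((linEval c0 c σ : ℤ) : ℝ) / (m : ℝ)
          = ((((g i : ℕ):ℤ) * d : ℤ):ℝ) * (2 * Real.pi) := by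
        rw [hd]
        push_cast
        field_simp
      rw [hang]
      exact Real.cos_int_mul_two_pi _
    have hsum : (∑ i : Fin t,
        Real.cos (2 * Real.pi * ((((g i : ℕ):ℤ)):ℝ) * ((linEval c0 c σ : ℤ) : ℝ) / (m : ℝ)))
        = (t:ℝ) := by
      rw [Finset.sum_congr rfl fun i _ => hterm i]
      simp
    rw [hsum]
    field_simp
  · intro hf
    have hnd : ¬ (m:ℤ) ∣ linEval c0 c σ := by
      rw [hchar σ]; simp [hf]
    set G := linEval c0 c σ with hG
    have hmZ : (m:ℤ) ≠ 0 := by exact_mod_cast (by omega : m ≠ 0)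
    have h1 : 0 ≤ G % m := Int.emod_nonneg G hmZ
    have h2 : G % m < m := Int.emod_lt_of_pos G (by exact_mod_cast (by omega : 0 < m))
    have h3 : G % m ≠ 0 := fun h => hnd (Int.dvd_of_emod_eq_zero h)
    set r : ℕ := (G % m).toNat with hr
    have hrcast : ((r:ℕ):ℤ) = G % m := Int.toNat_of_nonneg h1
    have hrIoo : r ∈ Finset.Ioo 0 m := Finset.mem_Ioo.mpr ⟨by omega, by omega⟩
    have hgB : g ∉ Bad r := fun h => hg (Finset.mem_biUnion.mpr ⟨r, hrIoo, h⟩)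
    have hlt : |S r g| < (t:ℝ)*sqe := by
      by_contra h
      push_neg at h
      exact hgB (by rw [hBad]; simp only [Finset.mem_filter, Finset.mem_univ, true_and]; exact h)
    have hGsplit : (G:ℝ) = (m:ℝ) * ((G / m : ℤ):ℝ) + (r:ℝ) := by
      have h := Int.mul_ediv_add_emod G m
      have : (m:ℤ) * (G / m) + ((r:ℕ):ℤ) = G := by rw [hrcast]; exact h
      exact_mod_cast this.symm
    have hangle : ∀ i : Fin t,
        Real.cos (2 * Real.pi * ((((g i : ℕ):ℤ)):ℝ) * ((G : ℤ) : ℝ) / (m : ℝ))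
        = Real.cos (2 * Real.pi * ((g i : ℕ):ℝ) * ((r:ℕ):ℝ) / m) := by
      intro i
      have heq : 2 * Real.pi * ((((g i : ℕ):ℤ)):ℝ) * ((G : ℤ) : ℝ) / (m : ℝ)
          = 2 * Real.pi * ((g i : ℕ):ℝ) * ((r:ℕ):ℝ) / m
            + ((((g i : ℕ):ℤ) * (G / m) : ℤ):ℝ) * (2 * Real.pi) := by
        push_cast
        field_simp
        linear_combination (((g i : ℕ):ℝ)) * hGsplit
      rw [heq, Real.cos_add_int_mul_two_pi]
    have hsum : (∑ i : Fin t,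
        Real.cos (2 * Real.pi * ((((g i : ℕ):ℤ)):ℝ) * ((G : ℤ) : ℝ) / (m : ℝ))) = S r g := by
      rw [hS]
      exact Finset.sum_congr rfl fun i _ => hangle i
    rw [hsum]
    have habs := abs_lt.mp hlt
    have hS2 : (S r g)^2 < (t:ℝ)^2 * ε := by
      calc (S r g)^2 < ((t:ℝ)*sqe)^2 := sq_lt_sq' habs.1 habs.2
        _ = (t:ℝ)^2*ε := by rw [mul_pow, hsqe, Real.sq_sqrt hε0.le]
    calc (1/(t:ℝ)^2) * (S r g)^2 < (1/(t:ℝ)^2) * ((t:ℝ)^2*ε) := by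
          apply mul_lt_mul_of_pos_left hS2 (by positivity)
      _ = ε := by field_simp
end

section
/- For all x ∈ {0,1}^n with n ≥ 2: Σ_{i=1}^{⌊n/2⌋} x_i·2^{i-1} − Σ_{i=⌈n/2⌉}^{n} x_i·2^{n-i} ≡ 0 (mod 2^{⌊n/2⌋}) if and only if x_i = x_{n+1-i} for all i ∈ {1,…,n}. (That is, this linear polynomial is a characteristic polynomial of the function Palindrome_n over Z_{2^{⌊n/2⌋}}.) -/
lemma key_lemma : ∀ m : ℕ, ∀ c : ℕ → ℤ, (∀ j, c j = 0 ∨ c j = 1 ∨ c j = -1) →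
    ((2:ℤ)^m ∣ ∑ j ∈ Finset.range m, c j * 2^j ↔ ∀ j ∈ Finset.range m, c j = 0) := by
  intro m
  induction m with
  | zero => intro c hc; simp
  | succ m ih =>
    intro c hc
    have hsum : ∑ j ∈ Finset.range (m+1), c j * 2^j
        = 2 * (∑ j ∈ Finset.range m, c (j+1) * 2^j) + c 0 := by
      rw [Finset.sum_range_succ', Finset.mul_sum, pow_zero, mul_one]
      congr 1
      exact Finset.sum_congr rfl fun j _ => by ring
    constructor
    · intro h
      rw [hsum] at h
      have h2 : (2:ℤ) ∣ 2 * (∑ j ∈ Finset.range m, c (j+1) * 2^j) + c 0 := by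
        refine dvd_trans ?_ h
        exact dvd_pow_self 2 (Nat.succ_ne_zero m)
      have hc0 : c 0 = 0 := by
        rcases hc 0 with h0 | h0 | h0
        · exact h0
        · exfalso; rw [h0] at h2; omega
        · exfalso; rw [h0] at h2; omega
      rw [hc0, add_zero, pow_succ, mul_comm ((2:ℤ)^m) 2] at h
      have hT : (2:ℤ)^m ∣ ∑ j ∈ Finset.range m, c (j+1) * 2^j :=
        (mul_dvd_mul_iff_left (by norm_num : (2:ℤ) ≠ 0)).mp h
      have hall := (ih (fun j => c (j+1)) (fun j => hc (j+1))).mp hT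
      intro j hj
      rcases Nat.eq_zero_or_pos j with rfl | hjp
      · exact hc0
      · obtain ⟨k, rfl⟩ := Nat.exists_eq_add_of_lt hjp
        simp only [zero_add] at *
        exact hall k (Finset.mem_range.mpr (by simp at hj; omega))
    · intro h
      have : ∑ j ∈ Finset.range (m+1), c j * 2^j = 0 :=
        Finset.sum_eq_zero fun j hj => by rw [h j hj]; ring
      rw [this]; exact dvd_zero _

/-- The linear polynomial `Σ_{i=1}^{⌊n/2⌋} x_i·2^{i-1} − Σ_{i=⌈n/2⌉}^{n} x_i·2^{n-i}`
is a characteristic polynomial of `Palindrome_n` over `ℤ_{2^{⌊n/2⌋}}` (for `n ≥ 2`):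
its value on a Boolean input is `≡ 0 (mod 2^{⌊n/2⌋})` iff `x_i = x_{n+1-i}` for all
`i ∈ {1,…,n}`. (Variables are indexed `1,…,n`.) -/
theorem palindrome_characteristic_polynomial (n : ℕ) (hn : 2 ≤ n) (x : ℕ → Bool) :
    (2 : ℤ) ^ (n / 2) ∣
        (∑ i ∈ Finset.Icc 1 (n / 2), (if x i then (1 : ℤ) else 0) * 2 ^ (i - 1)
          - ∑ i ∈ Finset.Icc ((n + 1) / 2) n, (if x i then (1 : ℤ) else 0) * 2 ^ (n - i))
      ↔ ∀ i ∈ Finset.Icc 1 n, x i = x (n + 1 - i) := by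
  set m := n / 2 with hm
  set c : ℕ → ℤ := fun k => (if x (k+1) then (1:ℤ) else 0) - (if x (n-k) then (1:ℤ) else 0)
    with hc
  have hcvals : ∀ j, c j = 0 ∨ c j = 1 ∨ c j = -1 := by
    intro j
    simp only [hc]
    cases x (j+1) <;> cases x (n-j) <;> simp
  have hA : ∑ i ∈ Finset.Icc 1 m, (if x i then (1:ℤ) else 0) * 2^(i-1)
      = ∑ k ∈ Finset.range m, (if x (k+1) then (1:ℤ) else 0) * 2^k := by
    rw [← Finset.Ico_add_one_right_eq_Icc, Finset.sum_Ico_eq_sum_range]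
    apply Finset.sum_congr rfl
    intro k _
    rw [Nat.add_comm 1 k, Nat.add_sub_cancel]
  have hB : ∑ i ∈ Finset.Icc ((n+1)/2) n, (if x i then (1:ℤ) else 0) * 2^(n-i)
      = ∑ k ∈ Finset.range (m+1), (if x (n-k) then (1:ℤ) else 0) * 2^k := by
    rw [← Finset.Ico_add_one_right_eq_Icc, Finset.sum_Ico_eq_sum_range]
    have h1 : n + 1 - (n+1)/2 = m + 1 := by omega
    rw [h1]
    conv_lhs => rw [← Finset.sum_range_reflect]
    apply Finset.sum_congr rfl
    intro k hk
    simp only [Finset.mem_range] at hk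
    have e1 : (n+1)/2 + (m + 1 - 1 - k) = n - k := by omega
    rw [e1]
    have e2 : n - (n - k) = k := by omega
    rw [e2]
  rw [hA, hB, Finset.sum_range_succ]
  have e : (∑ k ∈ Finset.range m, (if x (k+1) then (1:ℤ) else 0) * 2^k)
      - ((∑ k ∈ Finset.range m, (if x (n-k) then (1:ℤ) else 0) * 2^k)
          + (if x (n-m) then (1:ℤ) else 0) * 2^m)
      = (∑ k ∈ Finset.range m, c k * 2^k) - (if x (n-m) then (1:ℤ) else 0) * 2^m := by
    have h2 : ∑ k ∈ Finset.range m, c k * 2^k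
        = ∑ k ∈ Finset.range m, ((if x (k+1) then (1:ℤ) else 0) * 2^k
            - (if x (n-k) then (1:ℤ) else 0) * 2^k) :=
      Finset.sum_congr rfl fun k _ => by simp only [hc]; ring
    rw [h2, Finset.sum_sub_distrib]
    ring
  rw [e]
  have hdvd2 : (2:ℤ)^m ∣ (if x (n-m) then (1:ℤ) else 0) * 2^m := dvd_mul_left _ _
  have step : ((2:ℤ)^m ∣ (∑ k ∈ Finset.range m, c k * 2^k)
      - (if x (n-m) then (1:ℤ) else 0) * 2^m)
      ↔ (2:ℤ)^m ∣ ∑ k ∈ Finset.range m, c k * 2^k := by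
    constructor
    · intro h
      have := dvd_add h hdvd2
      simpa using this
    · intro h
      exact dvd_sub h hdvd2
  rw [step, key_lemma m c hcvals]
  constructor
  · intro h i hi
    simp only [Finset.mem_Icc] at hi
    by_cases h1 : i ≤ m
    · have hz := h (i-1) (Finset.mem_range.mpr (by omega))
      simp only [hc] at hz
      have hi1 : i - 1 + 1 = i := by omega
      have hi2 : n - (i-1) = n + 1 - i := by omega
      rw [hi1, hi2] at hz
      cases hxi : x i <;> cases hxj : x (n+1-i) <;> simp_all
    · by_cases h2 : n + 1 - i ≤ m
      · have hz := h (n - i) (Finset.mem_range.mpr (by omega))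
        simp only [hc] at hz
        have hi1 : n - i + 1 = n + 1 - i := by omega
        have hi2 : n - (n - i) = i := by omega
        rw [hi1, hi2] at hz
        cases hxi : x i <;> cases hxj : x (n+1-i) <;> simp_all
      · have : n + 1 - i = i := by omega
        rw [this]
  · intro h k hk
    simp only [Finset.mem_range] at hk
    have hz := h (k+1) (Finset.mem_Icc.mpr (by omega))
    simp only [hc]
    have : n + 1 - (k+1) = n - k := by omega
    rw [this] at hz
    rw [hz]
    ring
end

section
/- Let n ≥ 1 and let x = (x_{ij})_{1 ≤ i,j ≤ n} ∈ {0,1}^{n×n}. Then Σ_{i=1}^n Σ_{j=1}^n x_{ij}·((n+1)^{i-1} + (n+1)^{n+j-1}) − Σ_{i=1}^{2n} (n+1)^{i-1} ≡ 0 (mod (n+1)^{2n}) if and only if x is a permutation matrix, i.e., every row of x contains exactly one 1 and every column of x contains exactly one 1. (That is, this linear polynomial is a characteristic polynomial of the function PERM_n over Z_{(n+1)^{2n}}.) -/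
private lemma filter_card_one {α : Type*} [Fintype α] (p : α → Prop) [DecidablePred p] :
    (Finset.univ.filter p).card = 1 ↔ ∃! a, p a := by
  rw [Finset.card_eq_one]
  constructor
  · rintro ⟨a, ha⟩
    have h : ∀ y, p y ↔ y = a := by
      intro y
      rw [← Finset.mem_singleton, ← ha, Finset.mem_filter]
      simp
    exact ⟨a, (h a).mpr rfl, fun y hy => (h y).mp hy⟩
  · rintro ⟨a, ha, hu⟩
    refine ⟨a, ?_⟩
    ext y
    simp only [Finset.mem_filter, Finset.mem_univ, true_and, Finset.mem_singleton]
    exact ⟨fun h => hu y h, fun h => h ▸ ha⟩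

private lemma key (n : ℕ) (hn : 1 ≤ n) : ∀ (m : ℕ) (e : ℕ → ℤ),
    (∀ k, k < m → -1 ≤ e k ∧ e k ≤ (n : ℤ) - 1) →
    (((n : ℤ) + 1) ^ m ∣ ∑ k ∈ Finset.range m, e k * ((n : ℤ) + 1) ^ k ↔
      ∀ k, k < m → e k = 0) := by
  intro m
  induction m with
  | zero => intro e _; simp
  | succ m ih =>
    intro e he
    set b : ℤ := (n : ℤ) + 1 with hb
    have hbpos : (0 : ℤ) < b := by positivity
    have hsum : ∑ k ∈ Finset.range (m + 1), e k * b ^ k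
        = b * (∑ k ∈ Finset.range m, e (k + 1) * b ^ k) + e 0 := by
      rw [Finset.sum_range_succ', Finset.mul_sum]
      simp only [pow_zero, mul_one]
      congr 1
      refine Finset.sum_congr rfl fun k _ => ?_
      ring
    constructor
    · intro h
      have hb1 : b ∣ ∑ k ∈ Finset.range (m + 1), e k * b ^ k :=
        dvd_trans (dvd_pow_self b (Nat.succ_ne_zero m)) h
      have he0dvd : b ∣ e 0 := by
        rw [hsum] at hb1
        exact (dvd_add_right (Dvd.intro _ rfl)).mp hb1
      have he0 : e 0 = 0 := by
        by_contra hne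
        have h1 := Int.le_of_dvd (abs_pos.mpr hne) ((dvd_abs b (e 0)).mpr he0dvd)
        rcases he 0 (Nat.succ_pos m) with ⟨hl, hr⟩
        have hn' : (1 : ℤ) ≤ (n : ℤ) := by exact_mod_cast hn
        have h2 : |e 0| ≤ (n : ℤ) := by
          rw [abs_le]
          constructor <;> linarith
        have h3 : (n : ℤ) + 1 ≤ (n : ℤ) := le_trans (hb ▸ h1) h2
        linarith
      have hT : b ^ m ∣ ∑ k ∈ Finset.range m, e (k + 1) * b ^ k := by
        have h2 : b * b ^ m ∣ b * ∑ k ∈ Finset.range m, e (k + 1) * b ^ k := by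
          rw [← pow_succ']
          rw [hsum, he0, add_zero] at h
          exact h
        exact (mul_dvd_mul_iff_left (ne_of_gt hbpos)).mp h2
      have hrec := (ih (fun k => e (k + 1)) (fun k hk => he (k + 1) (by omega))).mp hT
      intro k hk
      cases k with
      | zero => exact he0
      | succ k => exact hrec k (by omega)
    · intro h
      have hz : ∑ k ∈ Finset.range (m + 1), e k * b ^ k = 0 :=
        Finset.sum_eq_zero fun k hk => by
          rw [h k (Finset.mem_range.mp hk), zero_mul]
      rw [hz]
      exact dvd_zero _

/-- The linear polynomial
`Σ_{i=1}^n Σ_{j=1}^n x_{ij}·((n+1)^{i-1} + (n+1)^{n+j-1}) − Σ_{i=1}^{2n} (n+1)^{i-1}`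
is a characteristic polynomial of `PERM_n` over `ℤ_{(n+1)^{2n}}` (for `n ≥ 1`):
its value on a Boolean matrix is `≡ 0 (mod (n+1)^{2n})` iff the matrix is a
permutation matrix (each row and each column contains exactly one `1`). -/
theorem perm_characteristic_polynomial (n : ℕ) (hn : 1 ≤ n) (x : Fin n → Fin n → Bool) :
    ((n : ℤ) + 1) ^ (2 * n) ∣
        (∑ i : Fin n, ∑ j : Fin n,
            (if x i j then (1 : ℤ) else 0) *
              (((n : ℤ) + 1) ^ (i : ℕ) + ((n : ℤ) + 1) ^ (n + (j : ℕ)))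
          - ∑ i ∈ Finset.range (2 * n), ((n : ℤ) + 1) ^ i)
      ↔ ((∀ i : Fin n, ∃! j : Fin n, x i j = true) ∧
          (∀ j : Fin n, ∃! i : Fin n, x i j = true)) := by
  classical
  set b : ℤ := (n : ℤ) + 1 with hb
  set r : Fin n → ℕ := fun i => (Finset.univ.filter (fun j => x i j = true)).card with hr
  set c : Fin n → ℕ := fun j => (Finset.univ.filter (fun i => x i j = true)).card with hc
  set e : ℕ → ℤ := fun k =>
    if h : k < n then (r ⟨k, h⟩ : ℤ) - 1
    else if h' : k - n < n then (c ⟨k - n, h'⟩ : ℤ) - 1 else 0 with he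
  have hrow : ∀ i : Fin n, (∑ j : Fin n, (if x i j then (1 : ℤ) else 0)) = (r i : ℤ) := by
    intro i
    rw [hr]
    simp [Finset.sum_boole]
  have hcol : ∀ j : Fin n, (∑ i : Fin n, (if x i j then (1 : ℤ) else 0)) = (c j : ℤ) := by
    intro j
    rw [hc]
    simp [Finset.sum_boole]
  have he1 : ∀ i : Fin n, e (i : ℕ) = (r i : ℤ) - 1 := by
    intro i
    rw [he]
    simp only [i.isLt, dif_pos, Fin.eta]
  have he2 : ∀ j : Fin n, e (n + (j : ℕ)) = (c j : ℤ) - 1 := by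
    intro j
    have h1 : ¬ (n + (j : ℕ) < n) := by omega
    have hlt : n + (j : ℕ) - n < n := by omega
    rw [he]
    simp only []
    rw [dif_neg h1, dif_pos hlt]
    have hj : (⟨n + (j : ℕ) - n, hlt⟩ : Fin n) = j :=
      Fin.ext (show n + (j : ℕ) - n = (j : ℕ) by omega)
    rw [hj]
  have hmain : (∑ i : Fin n, ∑ j : Fin n,
        (if x i j then (1 : ℤ) else 0) * (b ^ (i : ℕ) + b ^ (n + (j : ℕ))))
      - ∑ i ∈ Finset.range (2 * n), b ^ i
      = ∑ k ∈ Finset.range (2 * n), e k * b ^ k := by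
    have hsplit : (∑ i : Fin n, ∑ j : Fin n,
        (if x i j then (1 : ℤ) else 0) * (b ^ (i : ℕ) + b ^ (n + (j : ℕ))))
        = (∑ i : Fin n, (r i : ℤ) * b ^ (i : ℕ))
          + ∑ j : Fin n, (c j : ℤ) * b ^ (n + (j : ℕ)) := by
      simp_rw [mul_add, Finset.sum_add_distrib]
      congr 1
      · refine Finset.sum_congr rfl fun i _ => ?_
        rw [← Finset.sum_mul, hrow i]
      · rw [Finset.sum_comm]
        refine Finset.sum_congr rfl fun j _ => ?_
        rw [← Finset.sum_mul, hcol j]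
    rw [hsplit, two_mul]
    rw [Finset.sum_range_add, Finset.sum_range_add]
    rw [← Fin.sum_univ_eq_sum_range (fun k => e k * b ^ k) n,
        ← Fin.sum_univ_eq_sum_range (fun k => e (n + k) * b ^ (n + k)) n,
        ← Fin.sum_univ_eq_sum_range (fun k => b ^ k) n,
        ← Fin.sum_univ_eq_sum_range (fun k => b ^ (n + k)) n]
    have g1 : ∑ i : Fin n, e (i : ℕ) * b ^ (i : ℕ)
        = ∑ i : Fin n, ((r i : ℤ) - 1) * b ^ (i : ℕ) :=
      Finset.sum_congr rfl fun i _ => by rw [he1 i]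
    have g2 : ∑ j : Fin n, e (n + (j : ℕ)) * b ^ (n + (j : ℕ))
        = ∑ j : Fin n, ((c j : ℤ) - 1) * b ^ (n + (j : ℕ)) :=
      Finset.sum_congr rfl fun j _ => by rw [he2 j]
    rw [g1, g2]
    simp_rw [sub_mul, one_mul, Finset.sum_sub_distrib]
    ring
  rw [hmain]
  have hbounds : ∀ k, k < 2 * n → -1 ≤ e k ∧ e k ≤ (n : ℤ) - 1 := by
    intro k hk
    simp only [he]
    by_cases h : k < n
    · rw [dif_pos h]
      have h1 : r ⟨k, h⟩ ≤ n := by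
        calc r ⟨k, h⟩ ≤ Finset.univ.card := Finset.card_filter_le _ _
          _ = n := by simp
      have h2 : (r ⟨k, h⟩ : ℤ) ≤ (n : ℤ) := by exact_mod_cast h1
      have h3 : (0 : ℤ) ≤ (r ⟨k, h⟩ : ℤ) := Int.natCast_nonneg _
      constructor <;> linarith
    · rw [dif_neg h]
      have h' : k - n < n := by omega
      rw [dif_pos h']
      have h1 : c ⟨k - n, h'⟩ ≤ n := by
        calc c ⟨k - n, h'⟩ ≤ Finset.univ.card := Finset.card_filter_le _ _
          _ = n := by simp
      have h2 : (c ⟨k - n, h'⟩ : ℤ) ≤ (n : ℤ) := by exact_mod_cast h1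
      have h3 : (0 : ℤ) ≤ (c ⟨k - n, h'⟩ : ℤ) := Int.natCast_nonneg _
      constructor <;> linarith
  rw [key n hn (2 * n) e hbounds]
  constructor
  · intro h
    constructor
    · intro i
      have hi := h (i : ℕ) (by omega)
      rw [he1 i] at hi
      have : r i = 1 := by omega
      exact (filter_card_one _).mp this
    · intro j
      have hj := h (n + (j : ℕ)) (by have := j.isLt; omega)
      rw [he2 j] at hj
      have : c j = 1 := by omega
      exact (filter_card_one _).mp this
  · rintro ⟨h1, h2⟩ k hk
    simp only [he]
    by_cases h : k < n
    · rw [dif_pos h]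
      have : r ⟨k, h⟩ = 1 := (filter_card_one _).mpr (h1 ⟨k, h⟩)
      rw [this]
      ring
    · rw [dif_neg h]
      have h' : k - n < n := by omega
      rw [dif_pos h']
      have : c ⟨k - n, h'⟩ = 1 := (filter_card_one _).mpr (h2 ⟨k - n, h'⟩)
      rw [this]
      ring
end

section
/- Let f = f_1 ∧ f_2 ∧ … ∧ f_s be a conjunction of Boolean functions f_1, …, f_s : {0,1}^n → {0,1}, where each f_j has a linear characteristic polynomial g_j over Z_m (m ≥ 2). Then {g_1, …, g_s} is a linear characteristic of f over Z_m, and consequently for every ε ∈ (0,1) there exist t ≤ ⌈(2/ε)·ln(2m)⌉ and integers k_1, …, k_t such that P(σ) = (1/t)·Σ_{i=1}^t Π_{j=1}^s cos²(π k_i g_j(σ) / m) equals 1 for every σ with f(σ) = 1 and is at most 1/2 + √ε/2 for every σ with f(σ) = 0. -/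
open Finset Real

/-- Sum of cosines of equally spaced angles vanishes. -/
lemma fp_sum_cos_zero (m r : ℕ) (hr1 : 0 < r) (hr2 : r < m) :
    ∑ k ∈ Finset.range m, Real.cos (2 * Real.pi * k * r / m) = 0 := by
  have hm0 : 0 < m := lt_trans hr1 hr2
  have hmR : (0:ℝ) < m := by exact_mod_cast hm0
  set x : ℝ := 2 * Real.pi * r / m with hx
  have hcos : ∀ k : ℕ, Real.cos (2 * Real.pi * k * r / m)
      = (Complex.exp (x * Complex.I) ^ k).re := by
    intro k
    rw [← Complex.exp_nat_mul]
    have : (k : ℂ) * (↑x * Complex.I) = (↑(k * x) : ℝ) * Complex.I := by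
      push_cast; ring
    rw [this, Complex.exp_ofReal_mul_I_re]
    congr 1
    field_simp [hx]
    rw [hx]; field_simp
  have hne : Complex.exp (↑x * Complex.I) ≠ 1 := by
    intro h
    rw [Complex.exp_eq_one_iff] at h
    obtain ⟨z, hz⟩ := h
    have him := congrArg Complex.im hz
    simp [Complex.ofReal_mul, Complex.mul_im] at him
    -- him : x = z * (2 * π)  (roughly)
    have hπ := Real.pi_pos
    have hr : (r : ℝ) = z * m := by
      have hx' : 2 * Real.pi * r / m = (z : ℝ) * (2 * Real.pi) := by
        rw [← hx]; linarith [him]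
      field_simp at hx'
      nlinarith [hx']
    have hz0 : (0:ℝ) < (z:ℝ) := by
      nlinarith [show (0:ℝ) < r by exact_mod_cast hr1]
    have hz1 : (1:ℝ) ≤ (z:ℝ) := by exact_mod_cast (by exact_mod_cast hz0 : (0:ℤ) < z)
    have : (m:ℝ) ≤ (r:ℝ) := by nlinarith
    have : m ≤ r := by exact_mod_cast this
    omega
  have hpow : Complex.exp (↑x * Complex.I) ^ m = 1 := by
    rw [← Complex.exp_nat_mul]
    have : (m : ℂ) * (↑x * Complex.I) = (r : ℂ) * (2 * ↑Real.pi * Complex.I) := by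
      have hm' : (m:ℂ) ≠ 0 := by exact_mod_cast (Nat.cast_ne_zero (R := ℂ)).2 hm0.ne'
      field_simp [hx]
      rw [hx]; push_cast; field_simp
    rw [this, Complex.exp_nat_mul_two_pi_mul_I r]
  have hgeom : ∑ k ∈ Finset.range m, Complex.exp (↑x * Complex.I) ^ k = 0 := by
    rw [geom_sum_eq hne, hpow]
    simp
  calc ∑ k ∈ Finset.range m, Real.cos (2 * Real.pi * k * r / m)
      = ∑ k ∈ Finset.range m, (Complex.exp (↑x * Complex.I) ^ k).re := by
        exact Finset.sum_congr rfl fun k _ => hcos k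
    _ = (∑ k ∈ Finset.range m, Complex.exp (↑x * Complex.I) ^ k).re := by
        rw [Complex.re_sum]
    _ = 0 := by rw [hgeom]; simp

/-- Convexity bound: `exp (l*x) ≤ cosh l + x * sinh l` for `x ∈ [-1,1]`. -/
lemma fp_exp_mul_le (l x : ℝ) (h1 : -1 ≤ x) (h2 : x ≤ 1) :
    Real.exp (l * x) ≤ Real.cosh l + x * Real.sinh l := by
  have h := convexOn_exp.2 (Set.mem_univ l) (Set.mem_univ (-l))
    (show (0:ℝ) ≤ (1+x)/2 by linarith) (show (0:ℝ) ≤ (1-x)/2 by linarith) (by ring)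
  simp only [smul_eq_mul] at h
  have e1 : (1+x)/2 * l + (1-x)/2 * (-l) = l * x := by ring
  rw [e1] at h
  rw [Real.cosh_eq, Real.sinh_eq]
  calc Real.exp (l*x) ≤ (1+x)/2 * Real.exp l + (1-x)/2 * Real.exp (-l) := h
    _ = (Real.exp l + Real.exp (-l)) / 2 + x * ((Real.exp l - Real.exp (-l)) / 2) := by ring

/-- Hoeffding-style bound for a single residue. -/
lemma fp_sum_exp_le (m r : ℕ) (hr1 : 0 < r) (hr2 : r < m) (l : ℝ) :
    ∑ k : Fin m, Real.exp (l * Real.cos (2 * Real.pi * k * r / m))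
      ≤ m * Real.exp (l ^ 2 / 2) := by
  have h1 : ∑ k : Fin m, Real.exp (l * Real.cos (2 * Real.pi * k * r / m))
      ≤ ∑ k : Fin m, (Real.cosh l + Real.cos (2 * Real.pi * k * r / m) * Real.sinh l) := by
    apply Finset.sum_le_sum
    intro k _
    exact fp_exp_mul_le l _ (Real.neg_one_le_cos _) (Real.cos_le_one _)
  have h2 : ∑ k : Fin m, Real.cos (2 * Real.pi * k * r / m) = 0 := by
    rw [Fin.sum_univ_eq_sum_range (fun k => Real.cos (2 * Real.pi * k * r / m))]
    exact fp_sum_cos_zero m r hr1 hr2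
  calc ∑ k : Fin m, Real.exp (l * Real.cos (2 * Real.pi * k * r / m))
      ≤ ∑ k : Fin m, (Real.cosh l + Real.cos (2 * Real.pi * k * r / m) * Real.sinh l) := h1
    _ = m * Real.cosh l + (∑ k : Fin m, Real.cos (2 * Real.pi * k * r / m)) * Real.sinh l := by
        rw [Finset.sum_add_distrib, Finset.sum_const, ← Finset.sum_mul]
        simp [mul_comm]
    _ = m * Real.cosh l := by rw [h2]; ring
    _ ≤ m * Real.exp (l ^ 2 / 2) := by
        have := Real.cosh_le_exp_half_sq l
        have hm : (0:ℝ) ≤ m := Nat.cast_nonneg m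
        nlinarith

/-- Existence of a good tuple of fingerprint parameters. -/
lemma fp_exists_tuple (m t : ℕ) (hm : 2 ≤ m) (l : ℝ) (hl : 0 < l)
    (hT : (2 * m : ℝ) ≤ Real.exp (t * l ^ 2 / 2)) :
    ∃ K : Fin t → Fin m, ∀ r : ℕ, 0 < r → r < m →
      ∑ i, Real.cos (2 * Real.pi * (K i) * r / m) ≤ t * l := by
  by_contra hcon
  push_neg at hcon
  have key : ∀ K : Fin t → Fin m, Real.exp (t * l ^ 2) ≤
      ∑ r ∈ Finset.Ioo 0 m, Real.exp (l * ∑ i, Real.cos (2 * Real.pi * (K i) * r / m)) := by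
    intro K
    obtain ⟨r, hr1, hr2, hr3⟩ := hcon K
    calc Real.exp (t * l ^ 2)
        ≤ Real.exp (l * ∑ i, Real.cos (2 * Real.pi * (K i) * r / m)) := by
          apply Real.exp_le_exp.2; nlinarith
      _ ≤ _ := Finset.single_le_sum
          (f := fun r : ℕ => Real.exp (l * ∑ i, Real.cos (2 * Real.pi * (K i) * r / m)))
          (fun r _ => (Real.exp_pos _).le) (Finset.mem_Ioo.2 ⟨hr1, hr2⟩)
  have big : (m:ℝ)^t * Real.exp (t * l ^ 2)
      ≤ ((m:ℕ) - 1 : ℕ) * ((m:ℝ) * Real.exp (l ^ 2 / 2)) ^ t := by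
    calc (m:ℝ)^t * Real.exp (t * l ^ 2)
        = ∑ _K : Fin t → Fin m, Real.exp (t * l ^ 2) := by
          rw [Finset.sum_const]
          simp [Fintype.card_fun, mul_comm]
      _ ≤ ∑ K : Fin t → Fin m, ∑ r ∈ Finset.Ioo 0 m,
            Real.exp (l * ∑ i, Real.cos (2 * Real.pi * (K i) * r / m)) :=
          Finset.sum_le_sum fun K _ => key K
      _ = ∑ r ∈ Finset.Ioo 0 m, ∑ K : Fin t → Fin m,
            Real.exp (l * ∑ i, Real.cos (2 * Real.pi * (K i) * r / m)) := Finset.sum_comm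
      _ = ∑ r ∈ Finset.Ioo 0 m,
            (∑ k : Fin m, Real.exp (l * Real.cos (2 * Real.pi * k * r / m))) ^ t := by
          apply Finset.sum_congr rfl
          intro r _
          have hrhs : (∑ k : Fin m, Real.exp (l * Real.cos (2 * Real.pi * k * r / m))) ^ t
              = ∑ K : Fin t → Fin m, ∏ i, Real.exp (l * Real.cos (2 * Real.pi * (K i) * r / m)) := by
            rw [← Fintype.piFinset_univ,
              ← Finset.prod_univ_sum (fun _ : Fin t => (Finset.univ : Finset (Fin m)))
                (fun _ k => Real.exp (l * Real.cos (2 * Real.pi * k * r / m)))]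
            rw [Finset.prod_const, Finset.card_univ, Fintype.card_fin]
          rw [hrhs]
          apply Finset.sum_congr rfl
          intro K _
          rw [Finset.mul_sum, Real.exp_sum]
      _ ≤ ∑ _r ∈ Finset.Ioo 0 m, ((m:ℝ) * Real.exp (l ^ 2 / 2)) ^ t := by
          apply Finset.sum_le_sum
          intro r hr
          rw [Finset.mem_Ioo] at hr
          exact pow_le_pow_left₀ (Finset.sum_nonneg fun k _ => (Real.exp_pos _).le)
            (fp_sum_exp_le m r hr.1 hr.2 l) t
      _ = ((m:ℕ) - 1 : ℕ) * ((m:ℝ) * Real.exp (l ^ 2 / 2)) ^ t := by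
          rw [Finset.sum_const, Nat.card_Ioo]
          simp
  -- derive contradiction
  have hmR : (2:ℝ) ≤ m := by exact_mod_cast hm
  have hE : (0:ℝ) < Real.exp (t * l ^ 2 / 2) := Real.exp_pos _
  have hmt : (0:ℝ) < (m:ℝ)^t := by positivity
  have e1 : Real.exp (t * l ^ 2) = Real.exp (t * l ^ 2 / 2) * Real.exp (t * l ^ 2 / 2) := by
    rw [← Real.exp_add]; ring_nf
  have e2 : ((m:ℝ) * Real.exp (l ^ 2 / 2)) ^ t = (m:ℝ)^t * Real.exp (t * l ^ 2 / 2) := by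
    rw [mul_pow, ← Real.exp_nat_mul]
    ring_nf
  have hcard : (((m:ℕ) - 1 : ℕ) : ℝ) ≤ (m:ℝ) - 1 := by
    have : ((m:ℕ) - 1 : ℕ) = m - 1 := rfl
    rw [Nat.cast_sub (by omega)]
    simp
  rw [e1, e2] at big
  nlinarith [mul_pos hmt hE]


/-- If `f = f₁ ∧ … ∧ f_s` where each `f_j` has a linear characteristic polynomial
`g_j = c₀ⱼ + Σᵢ cᵢⱼxᵢ` over `ℤ_m`, then `{g₁,…,g_s}` is a linear characteristic of `f`
over `ℤ_m`, and for every `ε ∈ (0,1)` the generalized fingerprinting program with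
`t ≤ ⌈(2/ε)·ln(2m)⌉` parameters accepts `f⁻¹(1)` with probability `1` and `f⁻¹(0)`
with probability at most `1/2 + √ε/2`. -/
theorem conjunction_fingerprinting (n s : ℕ) (m : ℕ) (hm : 2 ≤ m)
    (f : Fin s → (Fin n → Bool) → Bool) (c0 : Fin s → ℤ) (c : Fin s → Fin n → ℤ)
    (hchar : ∀ (j : Fin s) (σ : Fin n → Bool),
      ((m : ℤ) ∣ linEval (c0 j) (c j) σ) ↔ f j σ = true) :
    (∀ σ : Fin n → Bool,
      (∀ j : Fin s, f j σ = true) ↔ ∀ j : Fin s, (m : ℤ) ∣ linEval (c0 j) (c j) σ) ∧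
    (∀ ε : ℝ, 0 < ε → ε < 1 →
      ∃ t : ℕ, 0 < t ∧ t ≤ ⌈(2 / ε) * Real.log (2 * (m : ℝ))⌉₊ ∧
        ∃ k : Fin t → ℤ,
          ∀ σ : Fin n → Bool,
            ((∀ j : Fin s, f j σ = true) →
              (1 / (t : ℝ)) *
                ∑ i, ∏ j, (Real.cos (Real.pi * (k i : ℝ) *
                  ((linEval (c0 j) (c j) σ : ℤ) : ℝ) / (m : ℝ))) ^ 2 = 1) ∧
            (¬ (∀ j : Fin s, f j σ = true) →
              (1 / (t : ℝ)) *
                ∑ i, ∏ j, (Real.cos (Real.pi * (k i : ℝ) *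
                  ((linEval (c0 j) (c j) σ : ℤ) : ℝ) / (m : ℝ))) ^ 2
                ≤ 1 / 2 + Real.sqrt ε / 2)) := by
  have hmR : (2:ℝ) ≤ (m:ℝ) := by exact_mod_cast hm
  have hm0 : (0:ℝ) < (m:ℝ) := by linarith
  constructor
  · intro σ
    exact ⟨fun h j => (hchar j σ).mpr (h j), fun h j => (hchar j σ).mp (h j)⟩
  intro ε hε0 hε1
  set T : ℕ := ⌈(2 / ε) * Real.log (2 * (m : ℝ))⌉₊ with hT
  have hlog : 0 < Real.log (2 * (m:ℝ)) := Real.log_pos (by linarith)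
  have hTpos : 0 < T := Nat.ceil_pos.2 (by positivity)
  refine ⟨T, hTpos, le_refl T, ?_⟩
  have hTR : (0:ℝ) < (T:ℝ) := by exact_mod_cast hTpos
  set l : ℝ := Real.sqrt ε with hldef
  have hl0 : 0 < l := Real.sqrt_pos.2 hε0
  have hl2 : l ^ 2 = ε := Real.sq_sqrt hε0.le
  have hTge : (2 / ε) * Real.log (2 * (m:ℝ)) ≤ (T:ℝ) := Nat.le_ceil _
  have hTexp : (2 * (m:ℝ)) ≤ Real.exp ((T:ℝ) * l ^ 2 / 2) := by
    have h1 : Real.log (2 * (m:ℝ)) ≤ (T:ℝ) * ε / 2 := by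
      have h2 : (2 / ε) * Real.log (2 * (m:ℝ)) * ε = 2 * Real.log (2 * (m:ℝ)) := by
        field_simp
      nlinarith [mul_le_mul_of_nonneg_right hTge hε0.le]
    calc (2 * (m:ℝ)) = Real.exp (Real.log (2 * (m:ℝ))) := (Real.exp_log (by linarith)).symm
      _ ≤ Real.exp ((T:ℝ) * l ^ 2 / 2) := Real.exp_le_exp.2 (by rw [hl2]; linarith)
  obtain ⟨K, hK⟩ := fp_exists_tuple m T hm l hl0 hTexp
  refine ⟨fun i => ((K i : ℕ) : ℤ), ?_⟩
  intro σ
  constructor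
  · -- accepted inputs
    intro h
    have hprod : ∀ i : Fin T, ∏ j, (Real.cos (Real.pi * (((K i : ℕ) : ℤ) : ℝ) *
        ((linEval (c0 j) (c j) σ : ℤ) : ℝ) / (m : ℝ))) ^ 2 = 1 := by
      intro i
      apply Finset.prod_eq_one
      intro j _
      obtain ⟨b, hb⟩ := (hchar j σ).mpr (h j)
      have hangle : Real.pi * (((K i : ℕ) : ℤ) : ℝ) * ((linEval (c0 j) (c j) σ : ℤ) : ℝ) / (m : ℝ)
          = (((K i : ℕ) * b : ℤ) : ℝ) * Real.pi := by
        rw [hb]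
        push_cast
        field_simp
      rw [hangle]
      have hsin := Real.sin_int_mul_pi ((K i : ℕ) * b)
      have hpyth := Real.sin_sq_add_cos_sq ((((K i : ℕ) * b : ℤ) : ℝ) * Real.pi)
      nlinarith
    rw [Finset.sum_congr rfl (fun i _ => hprod i), Finset.sum_const]
    simp [Finset.card_univ]
    field_simp
  · -- rejected inputs
    intro h
    push_neg at h
    obtain ⟨j0, hj0⟩ := h
    set a : ℤ := linEval (c0 j0) (c j0) σ with ha
    have hnd : ¬ ((m:ℤ) ∣ a) := fun hd => hj0 ((hchar j0 σ).mp hd)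
    have hmZ : (0:ℤ) < (m:ℤ) := by exact_mod_cast (by omega : 0 < m)
    set rr : ℕ := (a % (m:ℤ)).toNat with hrr
    have hmod0 : 0 ≤ a % (m:ℤ) := Int.emod_nonneg a hmZ.ne'
    have hmodlt : a % (m:ℤ) < (m:ℤ) := Int.emod_lt_of_pos a hmZ
    have hmodne : a % (m:ℤ) ≠ 0 := fun hc => hnd (Int.dvd_of_emod_eq_zero hc)
    have hrr0 : 0 < rr := by omega
    have hrrm : rr < m := by omega
    have hrrZ : (rr : ℤ) = a % (m:ℤ) := Int.toNat_of_nonneg hmod0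
    have hdiv : (m:ℤ) * (a / (m:ℤ)) + a % (m:ℤ) = a := Int.mul_ediv_add_emod a m
    have hpoint : ∀ i : Fin T, ∏ j, (Real.cos (Real.pi * (((K i : ℕ) : ℤ) : ℝ) *
        ((linEval (c0 j) (c j) σ : ℤ) : ℝ) / (m : ℝ))) ^ 2
        ≤ 1 / 2 + Real.cos (2 * Real.pi * ((K i : ℕ) : ℝ) * (rr : ℝ) / (m : ℝ)) / 2 := by
      intro i
      set F : Fin s → ℝ := fun j => (Real.cos (Real.pi * (((K i : ℕ) : ℤ) : ℝ) *
        ((linEval (c0 j) (c j) σ : ℤ) : ℝ) / (m : ℝ))) ^ 2 with hF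
      have hstep1 : ∏ j, F j ≤ F j0 := by
        rw [← Finset.mul_prod_erase Finset.univ F (Finset.mem_univ j0)]
        have h1 : ∏ j ∈ Finset.univ.erase j0, F j ≤ 1 :=
          Finset.prod_le_one (fun j _ => by positivity)
            (fun j _ => by
              have := Real.neg_one_le_cos (Real.pi * (((K i : ℕ) : ℤ) : ℝ) *
                ((linEval (c0 j) (c j) σ : ℤ) : ℝ) / (m : ℝ))
              have := Real.cos_le_one (Real.pi * (((K i : ℕ) : ℤ) : ℝ) *
                ((linEval (c0 j) (c j) σ : ℤ) : ℝ) / (m : ℝ))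
              simp only [hF]
              nlinarith)
        have hF0 : 0 ≤ F j0 := by simp only [hF]; positivity
        exact le_trans (mul_le_mul_of_nonneg_left h1 hF0) (le_of_eq (mul_one _))
      have hstep2 : F j0 = 1 / 2 + Real.cos (2 * Real.pi * ((K i : ℕ) : ℝ) * (rr : ℝ) / (m : ℝ)) / 2 := by
        simp only [hF]
        rw [Real.cos_sq]
        congr 2
        have hangle : 2 * (Real.pi * (((K i : ℕ) : ℤ) : ℝ) * ((a : ℤ) : ℝ) / (m : ℝ))
            = 2 * Real.pi * ((K i : ℕ) : ℝ) * (rr : ℝ) / (m : ℝ)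
              + (((K i : ℕ) : ℤ) * (a / (m:ℤ)) : ℤ) * (2 * Real.pi) := by
          have haZ : a = (m:ℤ) * (a / (m:ℤ)) + (rr:ℤ) := by rw [hrrZ]; linarith [hdiv]
          have haR : ((a : ℤ) : ℝ) = (m:ℝ) * (((a / (m:ℤ)) : ℤ) : ℝ) + (rr : ℝ) := by
            exact_mod_cast congrArg (fun z : ℤ => (z:ℝ)) haZ
          rw [haR]
          push_cast
          field_simp
          ring
        rw [← ha] at *
        rw [hangle, Real.cos_add_int_mul_two_pi]
      calc ∏ j, F j ≤ F j0 := hstep1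
        _ = _ := hstep2
    have hsum : ∑ i, ∏ j, (Real.cos (Real.pi * (((K i : ℕ) : ℤ) : ℝ) *
        ((linEval (c0 j) (c j) σ : ℤ) : ℝ) / (m : ℝ))) ^ 2
        ≤ (T:ℝ) / 2 + ((T:ℝ) * l) / 2 := by
      calc ∑ i, ∏ j, (Real.cos (Real.pi * (((K i : ℕ) : ℤ) : ℝ) *
            ((linEval (c0 j) (c j) σ : ℤ) : ℝ) / (m : ℝ))) ^ 2
          ≤ ∑ i : Fin T, (1 / 2 + Real.cos (2 * Real.pi * ((K i : ℕ) : ℝ) * (rr : ℝ) / (m : ℝ)) / 2) :=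
            Finset.sum_le_sum fun i _ => hpoint i
        _ = (T:ℝ) / 2 + (∑ i : Fin T, Real.cos (2 * Real.pi * ((K i : ℕ) : ℝ) * (rr : ℝ) / (m : ℝ))) / 2 := by
            rw [Finset.sum_add_distrib, Finset.sum_const, ← Finset.sum_div]
            simp [Finset.card_univ]
            ring
        _ ≤ (T:ℝ) / 2 + ((T:ℝ) * l) / 2 := by
            have := hK rr hrr0 hrrm
            linarith
    have hfinal := mul_le_mul_of_nonneg_left hsum (by positivity : (0:ℝ) ≤ 1 / (T:ℝ))
    calc (1 / (T:ℝ)) * ∑ i, ∏ j, (Real.cos (Real.pi * (((K i : ℕ) : ℤ) : ℝ) *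
          ((linEval (c0 j) (c j) σ : ℤ) : ℝ) / (m : ℝ))) ^ 2
        ≤ (1 / (T:ℝ)) * ((T:ℝ) / 2 + ((T:ℝ) * l) / 2) := hfinal
      _ = 1 / 2 + l / 2 := by field_simp
end

section
/- Let f = f_1 ∨ f_2 ∨ … ∨ f_s be a disjunction of Boolean functions f_1, …, f_s : {0,1}^n → {0,1}, where the negation of each f_j has a linear characteristic polynomial g_j over Z_m (m ≥ 2). Then {g_1, …, g_s} is a linear characteristic of ¬f = ¬f_1 ∧ … ∧ ¬f_s over Z_m, and consequently for every ε ∈ (0,1) there exist t ≤ ⌈(2/ε)·ln(2m)⌉ and integers k_1, …, k_t such that P(σ) = (1/t)·Σ_{i=1}^t Π_{j=1}^s cos²(π k_i g_j(σ) / m) equals 1 for every σ with f(σ) = 0 and is at most 1/2 + √ε/2 for every σ with f(σ) = 1. -/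
open Real Finset

lemma cos_sq_add_int_mul_pi (x : ℝ) (z : ℤ) : cos (x + z * π) ^ 2 = cos x ^ 2 := by
  rw [Real.cos_add_int_mul_pi, mul_pow]
  have h : ((-1:ℝ) ^ z) ^ 2 = (((-1:ℝ) ^ (2:ℕ)) : ℝ) ^ z := by
    rw [← zpow_natCast ((-1:ℝ)^z) 2, ← zpow_mul, ← zpow_natCast (-1:ℝ) 2, ← zpow_mul, mul_comm]
  rw [h]; norm_num

lemma cos_sq_int_mul_pi (z : ℤ) : cos (z * π) ^ 2 = 1 := by
  have := cos_sq_add_int_mul_pi 0 z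
  simpa using this

lemma sum_cos_eq_zero_s13 (m r : ℕ) (hr0 : 0 < r) (hrm : r < m) :
    ∑ k ∈ range m, Real.cos (2 * π * k * r / m) = 0 := by
  have hm0 : (0:ℕ) < m := lt_trans hr0 hrm
  have hmR : (m:ℝ) ≠ 0 := Nat.cast_ne_zero.mpr hm0.ne'
  have hmC : (m:ℂ) ≠ 0 := Nat.cast_ne_zero.mpr hm0.ne'
  set z : ℂ := Complex.exp ((2 * π * r / m : ℝ) * Complex.I) with hz
  have hzk : ∀ k : ℕ, (z ^ k).re = Real.cos (2 * π * k * r / m) := by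
    intro k
    rw [hz, ← Complex.exp_nat_mul]
    have : (k:ℂ) * ((2 * π * r / m : ℝ) * Complex.I) = ((2 * π * k * r / m : ℝ) : ℂ) * Complex.I := by
      push_cast; ring
    rw [this, Complex.exp_ofReal_mul_I_re]
  have hzm : z ^ m = 1 := by
    rw [hz, ← Complex.exp_nat_mul]
    have : (m:ℂ) * ((2 * π * r / m : ℝ) : ℂ) * Complex.I = (r:ℤ) * (2 * π * Complex.I) := by
      push_cast
      field_simp
    rw [← mul_assoc, this, Complex.exp_int_mul_two_pi_mul_I]
  have hz1 : z ≠ 1 := by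
    intro h
    rw [hz, Complex.exp_eq_one_iff] at h
    obtain ⟨q, hq⟩ := h
    have him : (2 * π * r / m : ℝ) = q * (2 * π) := by
      have := congrArg Complex.im hq
      simpa using this
    have hq' : (q:ℝ) * m = r := by
      field_simp at him
      nlinarith [Real.pi_pos]
    have hq0 : (0:ℝ) < q := by
      have hr : (0:ℝ) < r := by exact_mod_cast hr0
      have hmpos : (0:ℝ) < m := by exact_mod_cast hm0
      nlinarith
    have hq0' : 0 < q := by exact_mod_cast hq0
    have hq1 : (1:ℝ) ≤ q := by exact_mod_cast hq0'
    have hmpos : (0:ℝ) < m := by exact_mod_cast hm0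
    have : (m:ℝ) ≤ r := by nlinarith
    have : (r:ℝ) < m := by exact_mod_cast hrm
    linarith
  have hsum : ∑ k ∈ range m, z ^ k = 0 := by
    rw [geom_sum_eq hz1, hzm]
    simp
  calc ∑ k ∈ range m, Real.cos (2 * π * k * r / m)
      = (∑ k ∈ range m, z ^ k).re := by rw [Complex.re_sum]; exact (Finset.sum_congr rfl fun k _ => (hzk k).symm)
    _ = 0 := by rw [hsum]; simp

lemma sum_cos_sq (m r : ℕ) (hr0 : 0 < r) (hrm : r < m) :
    ∑ k ∈ range m, Real.cos (π * k * r / m) ^ 2 = m / 2 := by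
  have h : ∀ k ∈ range m, Real.cos (π * k * r / m) ^ 2 = 1/2 + Real.cos (2 * π * k * r / m) / 2 := by
    intro k _
    rw [Real.cos_sq]
    ring_nf
  rw [Finset.sum_congr rfl h, Finset.sum_add_distrib]
  have h2 : ∑ x ∈ range m, Real.cos (2 * π * x * r / m) / 2
      = (∑ x ∈ range m, Real.cos (2 * π * x * r / m)) / 2 := by
    rw [Finset.sum_div]
  rw [h2, sum_cos_eq_zero_s13 m r hr0 hrm]
  simp
  ring


lemma exp_mul_le (L x : ℝ) (hx0 : 0 ≤ x) (hx1 : x ≤ 1) :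
    Real.exp (L * x) ≤ 1 + x * (Real.exp L - 1) := by
  have h := convexOn_exp.2 (Set.mem_univ (0:ℝ)) (Set.mem_univ L)
    (by linarith : (0:ℝ) ≤ 1 - x) hx0 (by ring)
  simp only [smul_eq_mul, mul_zero, zero_add, Real.exp_zero, mul_one] at h
  calc Real.exp (L * x) = Real.exp ((1-x) * 0 + x * L) := by ring_nf
    _ ≤ (1-x) * 1 + x * Real.exp L := by simpa using h
    _ = 1 + x * (Real.exp L - 1) := by ring

lemma chernoff_count {m t : ℕ} (δ : ℝ) (hδ : 0 < δ) (X : Fin m → ℝ)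
    (hX0 : ∀ k, 0 ≤ X k) (hX1 : ∀ k, X k ≤ 1) (hmean : ∑ k, X k = (m:ℝ) / 2) :
    ((univ.filter (fun v : Fin t → Fin m =>
        (t:ℝ) * (1/2 + δ) < ∑ i, X (v i))).card : ℝ)
      ≤ (m:ℝ) ^ t * Real.exp (-(2 * δ^2) * t) := by
  set L : ℝ := 4 * δ with hL
  set B := univ.filter (fun v : Fin t → Fin m => (t:ℝ) * (1/2 + δ) < ∑ i, X (v i)) with hB
  have step1 : (B.card : ℝ) ≤ ∑ v : Fin t → Fin m,
      Real.exp (L * (∑ i, X (v i)) - L * (t * (1/2 + δ))) := by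
    rw [Finset.card_eq_sum_ones, Nat.cast_sum]
    calc (∑ v ∈ B, ((1:ℕ):ℝ))
        ≤ ∑ v ∈ B, Real.exp (L * (∑ i, X (v i)) - L * (t * (1/2 + δ))) := by
          apply Finset.sum_le_sum
          intro v hv
          rw [hB, Finset.mem_filter] at hv
          have : 0 ≤ L * (∑ i, X (v i)) - L * (t * (1/2 + δ)) := by
            have := hv.2
            nlinarith
          simpa using Real.one_le_exp this
      _ ≤ ∑ v : Fin t → Fin m, Real.exp (L * (∑ i, X (v i)) - L * (t * (1/2 + δ))) := by
          apply Finset.sum_le_sum_of_subset_of_nonneg (Finset.filter_subset _ _)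
          intro v _ _
          positivity
  have step2 : ∑ v : Fin t → Fin m, Real.exp (L * (∑ i, X (v i)) - L * (t * (1/2 + δ)))
      = Real.exp (- L * (t * (1/2 + δ))) * (∑ k : Fin m, Real.exp (L * X k)) ^ t := by
    have h1 : ∀ v : Fin t → Fin m, Real.exp (L * (∑ i, X (v i)) - L * (t * (1/2 + δ)))
        = Real.exp (- L * (t * (1/2 + δ))) * ∏ i, Real.exp (L * X (v i)) := by
      intro v
      rw [← Real.exp_sum, ← Real.exp_add, ← Finset.mul_sum]
      congr 1
      ring
    rw [Finset.sum_congr rfl (fun v _ => h1 v), ← Finset.mul_sum]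
    congr 1
    rw [← Fintype.piFinset_univ]
    calc (∑ v ∈ Fintype.piFinset (fun _ : Fin t => (univ : Finset (Fin m))),
            ∏ i, Real.exp (L * X (v i)))
        = ∏ _i : Fin t, ∑ k ∈ (univ : Finset (Fin m)), Real.exp (L * X k) :=
          (Finset.prod_univ_sum (fun _ : Fin t => (univ : Finset (Fin m)))
            (fun _ k => Real.exp (L * X k))).symm
      _ = (∑ k : Fin m, Real.exp (L * X k)) ^ t := by
          rw [Finset.prod_const, Finset.card_univ, Fintype.card_fin]
  have step3 : (∑ k : Fin m, Real.exp (L * X k)) ≤ (m:ℝ) * ((1 + Real.exp L) / 2) := by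
    calc ∑ k : Fin m, Real.exp (L * X k)
        ≤ ∑ k : Fin m, (1 + X k * (Real.exp L - 1)) := by
          apply Finset.sum_le_sum
          intro k _
          exact exp_mul_le L (X k) (hX0 k) (hX1 k)
      _ = m + (m/2) * (Real.exp L - 1) := by
          rw [Finset.sum_add_distrib, ← Finset.sum_mul, hmean]
          simp
      _ = (m:ℝ) * ((1 + Real.exp L) / 2) := by ring
  have hc : Real.exp (- L * (1/2 + δ)) * ((1 + Real.exp L) / 2) ≤ Real.exp (-(2 * δ^2)) := by
    have hcosh : Real.exp (- L * (1/2 + δ)) * ((1 + Real.exp L) / 2)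
        = Real.exp (- L * δ) * Real.cosh (L / 2) := by
      rw [Real.cosh_eq]
      have e1 : Real.exp (- L * (1/2 + δ)) * (1 + Real.exp L)
          = Real.exp (- L * δ) * (Real.exp (L/2) + Real.exp (-(L/2))) := by
        have h1 : Real.exp (-L*(1/2+δ)) = Real.exp (-L*δ) * Real.exp (-(L/2)) := by
          rw [← Real.exp_add]; congr 1; ring
        have h2 : Real.exp (-L*(1/2+δ)) * Real.exp L
            = Real.exp (-L*δ) * Real.exp (L/2) := by
          rw [← Real.exp_add, ← Real.exp_add]; congr 1; ring
        calc Real.exp (-L*(1/2+δ)) * (1 + Real.exp L)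
            = Real.exp (-L*(1/2+δ)) + Real.exp (-L*(1/2+δ)) * Real.exp L := by ring
          _ = Real.exp (-L*δ) * Real.exp (-(L/2)) + Real.exp (-L*δ) * Real.exp (L/2) := by
              rw [h2, h1]
          _ = Real.exp (-L*δ) * (Real.exp (L/2) + Real.exp (-(L/2))) := by ring
      calc Real.exp (- L * (1/2 + δ)) * ((1 + Real.exp L) / 2)
          = Real.exp (- L * (1/2 + δ)) * (1 + Real.exp L) / 2 := by ring
        _ = Real.exp (- L * δ) * (Real.exp (L/2) + Real.exp (-(L/2))) / 2 := by rw [e1]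
        _ = Real.exp (- L * δ) * ((Real.exp (L/2) + Real.exp (-(L/2))) / 2) := by ring
    rw [hcosh]
    calc Real.exp (- L * δ) * Real.cosh (L / 2)
        ≤ Real.exp (- L * δ) * Real.exp ((L/2)^2 / 2) := by
          apply mul_le_mul_of_nonneg_left (Real.cosh_le_exp_half_sq _) (Real.exp_pos _).le
      _ = Real.exp (- L * δ + (L/2)^2 / 2) := (Real.exp_add _ _).symm
      _ = Real.exp (-(2 * δ^2)) := by rw [hL]; ring_nf
  have hsumnn : (0:ℝ) ≤ ∑ k : Fin m, Real.exp (L * X k) := by positivity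
  calc (B.card : ℝ)
      ≤ Real.exp (- L * (t * (1/2 + δ))) * (∑ k : Fin m, Real.exp (L * X k)) ^ t := by
        rw [← step2]; exact step1
    _ ≤ Real.exp (- L * (t * (1/2 + δ))) * ((m:ℝ) * ((1 + Real.exp L) / 2)) ^ t := by
        apply mul_le_mul_of_nonneg_left _ (Real.exp_pos _).le
        exact pow_le_pow_left₀ hsumnn step3 t
    _ = ((m:ℝ) * (Real.exp (- L * (1/2 + δ)) * ((1 + Real.exp L) / 2))) ^ t := by
        rw [show - L * ((t:ℝ) * (1/2 + δ)) = (t:ℕ) * (- L * (1/2 + δ)) by push_cast; ring,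
          Real.exp_nat_mul, ← mul_pow]
        congr 1
        ring
    _ ≤ ((m:ℝ) * Real.exp (-(2 * δ^2))) ^ t := by
        apply pow_le_pow_left₀ (by positivity)
        apply mul_le_mul_of_nonneg_left hc (by positivity)
    _ = (m:ℝ) ^ t * Real.exp (-(2 * δ^2) * t) := by
        rw [mul_pow, show -(2 * δ^2) * (t:ℝ) = (t:ℕ) * (-(2 * δ^2)) by push_cast; ring,
          Real.exp_nat_mul]



/-- If `f = f₁ ∨ … ∨ f_s` where the negation of each `f_j` has a linear characteristic
polynomial `g_j` over `ℤ_m`, then `{g₁,…,g_s}` is a linear characteristic of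
`¬f = ¬f₁ ∧ … ∧ ¬f_s` over `ℤ_m`, and for every `ε ∈ (0,1)` the generalized
fingerprinting program with `t ≤ ⌈(2/ε)·ln(2m)⌉` parameters accepts `f⁻¹(0)` with
probability `1` and `f⁻¹(1)` with probability at most `1/2 + √ε/2`. -/
theorem disjunction_fingerprinting (n s : ℕ) (m : ℕ) (hm : 2 ≤ m)
    (f : Fin s → (Fin n → Bool) → Bool) (c0 : Fin s → ℤ) (c : Fin s → Fin n → ℤ)
    (hchar : ∀ (j : Fin s) (σ : Fin n → Bool),
      ((m : ℤ) ∣ linEval (c0 j) (c j) σ) ↔ f j σ = false) :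
    (∀ σ : Fin n → Bool,
      (¬ ∃ j : Fin s, f j σ = true) ↔ ∀ j : Fin s, (m : ℤ) ∣ linEval (c0 j) (c j) σ) ∧
    (∀ ε : ℝ, 0 < ε → ε < 1 →
      ∃ t : ℕ, 0 < t ∧ t ≤ ⌈(2 / ε) * Real.log (2 * (m : ℝ))⌉₊ ∧
        ∃ k : Fin t → ℤ,
          ∀ σ : Fin n → Bool,
            ((¬ ∃ j : Fin s, f j σ = true) →
              (1 / (t : ℝ)) *
                ∑ i, ∏ j, (Real.cos (Real.pi * (k i : ℝ) *
                  ((linEval (c0 j) (c j) σ : ℤ) : ℝ) / (m : ℝ))) ^ 2 = 1) ∧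
            ((∃ j : Fin s, f j σ = true) →
              (1 / (t : ℝ)) *
                ∑ i, ∏ j, (Real.cos (Real.pi * (k i : ℝ) *
                  ((linEval (c0 j) (c j) σ : ℤ) : ℝ) / (m : ℝ))) ^ 2
                ≤ 1 / 2 + Real.sqrt ε / 2)) := by
  have hm0 : 0 < m := by omega
  have hmR : (0:ℝ) < m := by exact_mod_cast hm0
  have hmZ : (m:ℤ) ≠ 0 := by exact_mod_cast hm0.ne'
  constructor
  · intro σ
    constructor
    · intro h j
      rw [hchar]
      rcases Bool.eq_false_or_eq_true (f j σ) with hf | hf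
      · exact absurd ⟨j, hf⟩ h
      · exact hf
    · rintro h ⟨j, hj⟩
      have := (hchar j σ).mp (h j)
      rw [this] at hj
      exact Bool.false_ne_true hj
  · intro ε hε0 hε1
    set δ : ℝ := Real.sqrt ε / 2 with hδdef
    have hδ : 0 < δ := by
      have := Real.sqrt_pos.mpr hε0
      positivity
    have hδsq : δ ^ 2 = ε / 4 := by
      rw [hδdef, div_pow, Real.sq_sqrt hε0.le]
      norm_num
    have hm2 : (2:ℝ) ≤ m := by exact_mod_cast hm
    have hlog : 0 < Real.log (2 * (m:ℝ)) := by
      apply Real.log_pos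
      nlinarith
    set t : ℕ := ⌈(2 / ε) * Real.log (2 * (m : ℝ))⌉₊ with htdef
    have ht0 : 0 < t := by
      apply Nat.ceil_pos.mpr
      positivity
    have htR : (0:ℝ) < t := by exact_mod_cast ht0
    have htge : (2 / ε) * Real.log (2 * (m:ℝ)) ≤ t := Nat.le_ceil _
    have hexp : Real.exp (-(2 * δ^2) * t) ≤ 1 / (2 * m) := by
      have h1 : Real.log (2 * (m:ℝ)) ≤ (ε/2) * t := by
        rw [div_mul_eq_mul_div, div_le_iff₀ (by positivity)] at htge
        nlinarith
      have h2 : -(2 * δ^2) * t ≤ - Real.log (2 * (m:ℝ)) := by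
        rw [hδsq]; nlinarith
      calc Real.exp (-(2 * δ^2) * t) ≤ Real.exp (- Real.log (2 * (m:ℝ))) := Real.exp_le_exp.mpr h2
        _ = 1 / (2 * m) := by
          rw [Real.exp_neg, Real.exp_log (by positivity)]
          ring
    -- set up the bad sets
    set X : ℕ → Fin m → ℝ := fun r k => Real.cos (π * (k:ℕ) * r / m) ^ 2 with hXdef
    have hXmean : ∀ r ∈ Finset.Ioo 0 m, ∑ k : Fin m, X r k = (m:ℝ)/2 := by
      intro r hr
      rw [Finset.mem_Ioo] at hr
      rw [hXdef, ← Finset.sum_range (fun k => Real.cos (π * k * r / m) ^ 2)]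
      exact sum_cos_sq m r hr.1 hr.2
    -- find a good v
    have hgood : ∃ v : Fin t → Fin m, ∀ r ∈ Finset.Ioo 0 m,
        ∑ i, X r (v i) ≤ (t:ℝ) * (1/2 + δ) := by
      by_contra hcon
      push_neg at hcon
      have hsub : (univ : Finset (Fin t → Fin m)) ⊆
          (Finset.Ioo 0 m).biUnion (fun r => univ.filter (fun v : Fin t → Fin m =>
            (t:ℝ) * (1/2 + δ) < ∑ i, X r (v i))) := by
        intro v _
        obtain ⟨r, hr, hlt⟩ := hcon v
        exact Finset.mem_biUnion.mpr ⟨r, hr, Finset.mem_filter.mpr ⟨Finset.mem_univ v, hlt⟩⟩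
      have hcard : ((m:ℝ))^t ≤ ∑ r ∈ Finset.Ioo 0 m,
          ((univ.filter (fun v : Fin t → Fin m =>
            (t:ℝ) * (1/2 + δ) < ∑ i, X r (v i))).card : ℝ) := by
        have h1 : (univ : Finset (Fin t → Fin m)).card = m ^ t := by
          simp [Finset.card_univ]
        have h2 := Finset.card_le_card hsub
        have h3 : ((Finset.Ioo 0 m).biUnion (fun r => univ.filter (fun v : Fin t → Fin m =>
            (t:ℝ) * (1/2 + δ) < ∑ i, X r (v i)))).card
            ≤ ∑ r ∈ Finset.Ioo 0 m, (univ.filter (fun v : Fin t → Fin m =>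
            (t:ℝ) * (1/2 + δ) < ∑ i, X r (v i))).card :=
          Finset.card_biUnion_le
        have : (m:ℕ) ^ t ≤ ∑ r ∈ Finset.Ioo 0 m, (univ.filter (fun v : Fin t → Fin m =>
            (t:ℝ) * (1/2 + δ) < ∑ i, X r (v i))).card := by
          rw [← h1]
          exact le_trans h2 h3
        exact_mod_cast this
      have hbound : ∑ r ∈ Finset.Ioo 0 m,
          ((univ.filter (fun v : Fin t → Fin m =>
            (t:ℝ) * (1/2 + δ) < ∑ i, X r (v i))).card : ℝ)
          ≤ (m - 1 : ℝ) * ((m:ℝ)^t * (1/(2*m))) := by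
        calc ∑ r ∈ Finset.Ioo 0 m, ((univ.filter (fun v : Fin t → Fin m =>
              (t:ℝ) * (1/2 + δ) < ∑ i, X r (v i))).card : ℝ)
            ≤ ∑ r ∈ Finset.Ioo 0 m, (m:ℝ)^t * (1/(2*m)) := by
              apply Finset.sum_le_sum
              intro r hr
              calc ((univ.filter (fun v : Fin t → Fin m =>
                    (t:ℝ) * (1/2 + δ) < ∑ i, X r (v i))).card : ℝ)
                  ≤ (m:ℝ) ^ t * Real.exp (-(2 * δ^2) * t) := by
                    rw [Finset.mem_Ioo] at hr
                    apply chernoff_count δ hδ (X r)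
                      (fun k => sq_nonneg _) (fun k => Real.cos_sq_le_one _)
                      (hXmean r (Finset.mem_Ioo.mpr hr))
                _ ≤ (m:ℝ)^t * (1/(2*m)) := by
                    apply mul_le_mul_of_nonneg_left hexp (by positivity)
          _ = (m - 1 : ℝ) * ((m:ℝ)^t * (1/(2*m))) := by
              rw [Finset.sum_const, Nat.card_Ioo, nsmul_eq_mul]
              congr 1
              rw [show m - 0 - 1 = m - 1 by omega, Nat.cast_sub (by omega : 1 ≤ m),
                Nat.cast_one]
      have hlt : (m - 1 : ℝ) * ((m:ℝ)^t * (1/(2*m))) < (m:ℝ)^t := by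
        have hp : (0:ℝ) < (m:ℝ)^t := by positivity
        have hfrac : ((m:ℝ) - 1)/(2*m) < 1 := by
          rw [div_lt_one (by positivity)]
          linarith
        calc (m - 1 : ℝ) * ((m:ℝ)^t * (1/(2*m)))
            = (m:ℝ)^t * (((m:ℝ)-1)/(2*m)) := by ring
          _ < (m:ℝ)^t * 1 := mul_lt_mul_of_pos_left hfrac hp
          _ = (m:ℝ)^t := mul_one _
      linarith
    obtain ⟨v, hv⟩ := hgood
    refine ⟨t, ht0, le_refl _, fun i => ((v i : ℕ) : ℤ), fun σ => ⟨?_, ?_⟩⟩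
    · -- accepted inputs: all divisible
      intro h
      have hall : ∀ j, (m:ℤ) ∣ linEval (c0 j) (c j) σ := by
        intro j
        rw [hchar]
        rcases Bool.eq_false_or_eq_true (f j σ) with hf | hf
        · exact absurd ⟨j, hf⟩ h
        · exact hf
      have hterm : ∀ (i : Fin t) (j : Fin s),
          (Real.cos (π * (((v i : ℕ) : ℤ) : ℝ) * ((linEval (c0 j) (c j) σ : ℤ) : ℝ) / m)) ^ 2 = 1 := by
        intro i j
        obtain ⟨q, hq⟩ := hall j
        have harg : π * (((v i : ℕ) : ℤ) : ℝ) * ((linEval (c0 j) (c j) σ : ℤ) : ℝ) / m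
            = (((v i : ℕ) : ℤ) * q : ℤ) * π := by
          rw [hq]
          push_cast
          field_simp
        rw [harg, cos_sq_int_mul_pi]
      calc (1 / (t : ℝ)) * ∑ i, ∏ j, (Real.cos (π * (((v i : ℕ):ℤ) : ℝ) *
              ((linEval (c0 j) (c j) σ : ℤ) : ℝ) / m)) ^ 2
          = (1 / (t:ℝ)) * ∑ i : Fin t, (1:ℝ) := by
            congr 1
            apply Finset.sum_congr rfl
            intro i _
            rw [Finset.prod_congr rfl (fun j _ => hterm i j), Finset.prod_const_one]
        _ = 1 := by
            rw [Finset.sum_const, Finset.card_univ, Fintype.card_fin, nsmul_eq_mul, mul_one]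
            field_simp
    · -- rejected inputs
      rintro ⟨j, hj⟩
      set a : ℤ := linEval (c0 j) (c j) σ with hadef
      have hnd : ¬ (m:ℤ) ∣ a := by
        intro hd
        have := (hchar j σ).mp hd
        rw [this] at hj
        exact Bool.false_ne_true hj
      have hmod0 : a % m ≠ 0 := fun h => hnd (Int.dvd_of_emod_eq_zero h)
      have hmodnn : 0 ≤ a % m := Int.emod_nonneg a hmZ
      have hmodlt : a % m < m := Int.emod_lt_of_pos a (by exact_mod_cast hm0)
      set r : ℕ := (a % m).toNat with hrdef
      have hrZ : (r : ℤ) = a % m := Int.toNat_of_nonneg hmodnn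
      have hrIoo : r ∈ Finset.Ioo 0 m := by
        rw [Finset.mem_Ioo]
        constructor
        · omega
        · omega
      -- pointwise: the j-th factor equals X r (v i)
      have hfact : ∀ i : Fin t,
          (Real.cos (π * (((v i : ℕ) : ℤ) : ℝ) * ((a : ℤ) : ℝ) / m)) ^ 2 = X r (v i) := by
        intro i
        have hsplit : (m:ℤ) * (a / (m:ℤ)) + (r:ℤ) = a := by
          rw [hrZ]; exact Int.mul_ediv_add_emod a m
        have haR : ((a : ℤ) : ℝ) = (m:ℝ) * ((a / (m:ℤ) : ℤ) : ℝ) + (r : ℝ) := by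
          exact_mod_cast hsplit.symm
        have harg : π * (((v i : ℕ) : ℤ) : ℝ) * ((a : ℤ) : ℝ) / m
            = π * ((v i : ℕ) : ℝ) * (r : ℝ) / m + (((v i : ℕ) : ℤ) * (a / (m:ℤ)) : ℤ) * π := by
          rw [haR]
          push_cast
          field_simp
          ring
        rw [harg, cos_sq_add_int_mul_pi, hXdef]
      have hprodle : ∀ i : Fin t,
          ∏ j', (Real.cos (π * (((v i : ℕ) : ℤ) : ℝ) *
            ((linEval (c0 j') (c j') σ : ℤ) : ℝ) / m)) ^ 2 ≤ X r (v i) := by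
        intro i
        rw [← hfact i]
        set F : Fin s → ℝ := fun j' => (Real.cos (π * (((v i : ℕ) : ℤ) : ℝ) *
            ((linEval (c0 j') (c j') σ : ℤ) : ℝ) / m)) ^ 2 with hFdef
        calc ∏ j', F j' = F j * ∏ j' ∈ univ.erase j, F j' :=
              (Finset.mul_prod_erase univ F (Finset.mem_univ j)).symm
          _ ≤ F j * 1 := by
              apply mul_le_mul_of_nonneg_left _ (sq_nonneg _)
              apply Finset.prod_le_one
              · intro j' _; exact sq_nonneg _
              · intro j' _; exact Real.cos_sq_le_one _
          _ = F j := mul_one _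
      calc (1 / (t : ℝ)) * ∑ i, ∏ j', (Real.cos (π * (((v i : ℕ):ℤ) : ℝ) *
              ((linEval (c0 j') (c j') σ : ℤ) : ℝ) / m)) ^ 2
          ≤ (1 / (t:ℝ)) * ∑ i, X r (v i) := by
            apply mul_le_mul_of_nonneg_left _ (by positivity)
            exact Finset.sum_le_sum (fun i _ => hprodle i)
        _ ≤ (1 / (t:ℝ)) * ((t:ℝ) * (1/2 + δ)) := by
            apply mul_le_mul_of_nonneg_left (hv r hrIoo) (by positivity)
        _ = 1/2 + δ := by field_simp
        _ = 1/2 + Real.sqrt ε / 2 := by rw [hδdef]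
end

section
/- Let f : {0,1}^n → {0,1} be a Boolean function and suppose ¬f is written as a disjunction K_1 ∨ … ∨ K_l of conjunctions of literals (a sum-of-products/DNF representation of ¬f). For each i let K̃_i denote the integer polynomial obtained from K_i by replacing each conjunction by the product of its literals, where a negated literal ¬x_j is replaced by (1 − x_j). If l < 2^n, then the polynomial g = K̃_1 + … + K̃_l satisfies: for all σ ∈ {0,1}^n, g(σ) ≡ 0 (mod 2^n) iff f(σ) = 1; i.e., g is a characteristic polynomial of f over Z_{2^n}. -/
/-- If `¬f` is given by a DNF `K₁ ∨ … ∨ K_l` with `l < 2^n` — each term `K_i` is a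
conjunction of literals, encoded as a finite set `S i` of pairs `(variable, polarity)`
so that `K_i(σ) = 1` iff `σ v = b` for every `(v, b) ∈ S i` — then the polynomial
`g = K̃₁ + … + K̃_l` (where in `K̃_i` each literal `x_j` contributes the factor `x_j`
and each `¬x_j` the factor `1 − x_j`) is a characteristic polynomial of `f` over
`ℤ_{2^n}`: for all `σ`, `g(σ) ≡ 0 (mod 2^n)` iff `f(σ) = 1`. -/
theorem dnf_characteristic_polynomial (n l : ℕ) (hl : l < 2 ^ n)
    (f : (Fin n → Bool) → Bool) (S : Fin l → Finset (Fin n × Bool))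
    (hdnf : ∀ σ : Fin n → Bool,
      f σ = false ↔ ∃ i : Fin l, ∀ p ∈ S i, σ p.1 = p.2) :
    ∀ σ : Fin n → Bool,
      ((2 : ℤ) ^ n ∣
          ∑ i : Fin l, ∏ p ∈ S i,
            (if p.2 then (if σ p.1 then (1 : ℤ) else 0)
             else 1 - (if σ p.1 then (1 : ℤ) else 0)))
        ↔ f σ = true := by
  intro σ
  classical
  have hfac : ∀ (p : Fin n × Bool),
      (if p.2 then (if σ p.1 then (1 : ℤ) else 0)
       else 1 - (if σ p.1 then (1 : ℤ) else 0)) =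
      (if σ p.1 = p.2 then 1 else 0) := by
    intro ⟨v, b⟩
    cases b <;> cases h : σ v <;> simp [h]
  have hTval : ∀ i : Fin l, (∏ p ∈ S i,
      (if p.2 then (if σ p.1 then (1 : ℤ) else 0)
       else 1 - (if σ p.1 then (1 : ℤ) else 0))) =
      if (∀ p ∈ S i, σ p.1 = p.2) then 1 else 0 := by
    intro i
    simp only [hfac]
    by_cases h : ∀ p ∈ S i, σ p.1 = p.2
    · rw [if_pos h]
      exact Finset.prod_eq_one (fun p hp => by rw [if_pos (h p hp)])
    · rw [if_neg h]
      push_neg at h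
      obtain ⟨p, hp, hne⟩ := h
      exact Finset.prod_eq_zero hp (by rw [if_neg hne])
  simp only [hTval]
  constructor
  · intro hdvd
    by_contra hft
    have hff : f σ = false := by
      cases h : f σ
      · rfl
      · exact absurd h hft
    obtain ⟨i, hi⟩ := (hdnf σ).mp hff
    -- sum is positive and ≤ l < 2^n, contradiction with divisibility
    have hpos : 0 < ∑ j : Fin l, (if (∀ p ∈ S j, σ p.1 = p.2) then (1:ℤ) else 0) := by
      apply Finset.sum_pos'
      · intro j _; positivity
      · exact ⟨i, Finset.mem_univ i, by rw [if_pos hi]; norm_num⟩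
    have hle : (∑ j : Fin l, (if (∀ p ∈ S j, σ p.1 = p.2) then (1:ℤ) else 0)) ≤ l := by
      calc (∑ j : Fin l, (if (∀ p ∈ S j, σ p.1 = p.2) then (1:ℤ) else 0))
          ≤ ∑ _j : Fin l, (1:ℤ) := by
            apply Finset.sum_le_sum; intro j _; split <;> norm_num
        _ = l := by simp
    have hlt : (∑ j : Fin l, (if (∀ p ∈ S j, σ p.1 = p.2) then (1:ℤ) else 0)) < 2 ^ n := by
      calc _ ≤ (l : ℤ) := hle
        _ < 2 ^ n := by exact_mod_cast hl
    have := Int.le_of_dvd hpos hdvd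
    omega
  · intro hft
    have : ∀ j : Fin l, ¬ (∀ p ∈ S j, σ p.1 = p.2) := by
      intro j hj
      have : f σ = false := (hdnf σ).mpr ⟨j, hj⟩
      rw [hft] at this; simp at this
    have hz : (∑ j : Fin l, (if (∀ p ∈ S j, σ p.1 = p.2) then (1:ℤ) else 0)) = 0 := by
      apply Finset.sum_eq_zero; intro j _; rw [if_neg (this j)]
    rw [hz]
    exact dvd_zero _
end
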